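/- arXiv:1108.5464 — 2 statements merged into one kernel-verified Lean document; each statement's English description precedes it below -/
import Mathlib

section
/- Let Z_1, Z_2 be independent random variables, each with regularly varying tail of index -α (α > 0). Then the product |Z_1 Z_2| has regularly varying tail of index -α, i.e., there exists a slowly varying function L_1 such that P(|Z_1 Z_2| > x) = x^{-α} L_1(x). -/
open MeasureTheory ProbabilityTheory Filter Real Set
open scoped ENNReal

namespace EGProd

lemma sqrt_tendsto_atTop : Tendsto Real.sqrt atTop atTop := by
  apply tendsto_atTop.2
  intro b
  filter_upwards [eventually_ge_atTop (b ^ 2), eventually_ge_atTop (0:ℝ)] with t ht ht0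
  rcases le_or_gt b 0 with hb | hb
  · exact hb.trans (Real.sqrt_nonneg t)
  · exact (Real.le_sqrt hb.le ht0).2 ht

variable {Ω : Type*} [MeasurableSpace Ω]

/-- tail of |Z| -/
noncomputable def tl (μ : Measure Ω) (Z : Ω → ℝ) (u : ℝ) : ℝ≥0∞ := μ {ω | u < |Z ω|}

noncomputable def tlr (μ : Measure Ω) (Z : Ω → ℝ) (u : ℝ) : ℝ := (tl μ Z u).toReal

lemma tl_ne_top (μ : Measure Ω) [IsProbabilityMeasure μ] (Z : Ω → ℝ) (u : ℝ) :
    tl μ Z u ≠ ⊤ := measure_ne_top _ _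

lemma tl_anti (μ : Measure Ω) (Z : Ω → ℝ) : Antitone (tl μ Z) := by
  intro a b hab
  exact measure_mono (fun ω hω => lt_of_le_of_lt hab hω)

lemma tlr_nonneg (μ : Measure Ω) (Z : Ω → ℝ) (u : ℝ) : 0 ≤ tlr μ Z u :=
  ENNReal.toReal_nonneg

lemma ofReal_tlr (μ : Measure Ω) [IsProbabilityMeasure μ] (Z : Ω → ℝ) (u : ℝ) :
    ENNReal.ofReal (tlr μ Z u) = tl μ Z u := ENNReal.ofReal_toReal (tl_ne_top μ Z u)

section tailfacts

variable (μ : Measure Ω) [IsProbabilityMeasure μ] (Z : Ω → ℝ)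
    {α : ℝ} (hα : 0 < α) {L : ℝ → ℝ}
    (hLpos : ∀ x : ℝ, 0 < x → 0 < L x)
    (hLslow : ∀ x : ℝ, 0 < x → Tendsto (fun t => L (t * x) / L t) atTop (nhds 1))
    (htail : ∀ x : ℝ, 0 < x → (μ {ω | x < |Z ω|}).toReal = x ^ (-α) * L x)

include htail hLpos in
lemma tlr_pos {u : ℝ} (hu : 0 < u) : 0 < tlr μ Z u := by
  have := htail u hu
  rw [tlr, tl, this]
  exact mul_pos (Real.rpow_pos_of_pos hu _) (hLpos u hu)

include htail hLpos in
lemma tl_ne_zero {u : ℝ} (hu : 0 < u) : tl μ Z u ≠ 0 := by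
  intro h
  have := tlr_pos μ Z hLpos htail hu
  rw [tlr, h] at this
  simp at this

include htail hLpos hLslow hα in
lemma tl_rv {ρ : ℝ} (hρ : 0 < ρ) :
    Tendsto (fun t => tlr μ Z (t * ρ) / tlr μ Z t) atTop (nhds (ρ ^ (-α))) := by
  have h1 : Tendsto (fun t => ρ ^ (-α) * (L (t * ρ) / L t)) atTop (nhds (ρ ^ (-α))) := by
    have := (hLslow ρ hρ).const_mul (ρ ^ (-α))
    simpa using this
  apply h1.congr'
  filter_upwards [eventually_gt_atTop (0:ℝ)] with t ht
  have htρ : 0 < t * ρ := mul_pos ht hρ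
  rw [tlr, tlr, tl, tl, htail t ht, htail (t * ρ) htρ]
  rw [Real.mul_rpow ht.le hρ.le]
  have h2 : t ^ (-α) ≠ 0 := ne_of_gt (Real.rpow_pos_of_pos ht _)
  have h3 : L t ≠ 0 := ne_of_gt (hLpos t ht)
  field_simp

end tailfacts




/-- Generic block decomposition lemma. -/
lemma blockLemma (μ : Measure Ω) [IsFiniteMeasure μ]
    (X Y : Ω → ℝ) (hX : Measurable X) (hY : Measurable Y)
    (hX0 : ∀ ω, 0 ≤ X ω)
    (hind : ∀ A B : Set ℝ, MeasurableSet A → MeasurableSet B →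
      μ (X ⁻¹' A ∩ Y ⁻¹' B) = μ (X ⁻¹' A) * μ (Y ⁻¹' B))
    (r B s₁ s₂ : ℝ) (hr : 1 < r) (hB : 0 < B) (hs₁ : 0 < s₁) (hs₂ : 0 < s₂)
    (c : ℝ≥0∞)
    (hterm : ∀ u : ℝ, s₁ / (B * r) ≤ u →
      μ (X ⁻¹' Ioi u) ≤ c * μ (X ⁻¹' Ioi (u * (s₂ * r / s₁)))) :
    μ {ω | s₁ < X ω * Y ω ∧ Y ω ≤ B} ≤ c * μ {ω | s₂ < X ω * Y ω ∧ Y ω ≤ B} := by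
  have hr0 : (0:ℝ) < r := lt_trans one_pos hr
  set U : ℤ → Set Ω := fun k =>
    X ⁻¹' Ioi (s₁ / r ^ (k+1)) ∩ Y ⁻¹' (Ioc (r ^ k) (r ^ (k+1)) ∩ Iic B) with hU
  set V : ℤ → Set Ω := fun k =>
    X ⁻¹' Ioi (s₂ * r / r ^ (k+1)) ∩ Y ⁻¹' (Ioc (r ^ k) (r ^ (k+1)) ∩ Iic B) with hV
  have hVmeas : ∀ k, MeasurableSet (V k) := fun k =>
    (hX measurableSet_Ioi).inter (hY (measurableSet_Ioc.inter measurableSet_Iic))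
  -- inclusion of LHS into union of U's
  have hsub : {ω | s₁ < X ω * Y ω ∧ Y ω ≤ B} ⊆ ⋃ k, U k := by
    rintro ω ⟨h1, h2⟩
    have hY0 : 0 < Y ω := by
      by_contra h
      push_neg at h
      have : X ω * Y ω ≤ 0 := mul_nonpos_of_nonneg_of_nonpos (hX0 ω) h
      linarith
    obtain ⟨k, hk⟩ := exists_mem_Ioc_zpow hY0 hr
    refine mem_iUnion.2 ⟨k, ?_, ⟨hk, h2⟩⟩
    have hpk : (0:ℝ) < r ^ (k+1) := zpow_pos hr0 _
    rw [mem_preimage, mem_Ioi, div_lt_iff₀ hpk]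
    calc s₁ < X ω * Y ω := h1
      _ ≤ X ω * r ^ (k+1) := mul_le_mul_of_nonneg_left hk.2 (hX0 ω)
  -- termwise
  have hUV : ∀ k, μ (U k) ≤ c * μ (V k) := by
    intro k
    by_cases hk : r ^ k < B
    · have hpk : (0:ℝ) < r ^ (k+1) := zpow_pos hr0 _
      have hble : r ^ (k+1) ≤ B * r := by
        rw [zpow_add_one₀ (ne_of_gt hr0)]
        exact mul_le_mul_of_nonneg_right hk.le hr0.le
      have hu : s₁ / (B * r) ≤ s₁ / r ^ (k+1) := by
        gcongr
      have harg : (s₁ / r ^ (k+1)) * (s₂ * r / s₁) = s₂ * r / r ^ (k+1) := by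
        field_simp
      calc μ (U k) = μ (X ⁻¹' Ioi (s₁ / r ^ (k+1)))
            * μ (Y ⁻¹' (Ioc (r ^ k) (r ^ (k+1)) ∩ Iic B)) :=
          hind _ _ measurableSet_Ioi (measurableSet_Ioc.inter measurableSet_Iic)
        _ ≤ (c * μ (X ⁻¹' Ioi (s₂ * r / r ^ (k+1))))
            * μ (Y ⁻¹' (Ioc (r ^ k) (r ^ (k+1)) ∩ Iic B)) := by
          apply mul_le_mul_left
          have := hterm (s₁ / r ^ (k+1)) hu
          rwa [harg] at this
        _ = c * μ (V k) := by
          rw [mul_assoc, hV]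
          congr 1
          exact (hind _ _ measurableSet_Ioi (measurableSet_Ioc.inter measurableSet_Iic)).symm
    · have : Ioc (r ^ k) (r ^ (k+1)) ∩ Iic B = ∅ := by
        ext y
        simp only [mem_inter_iff, mem_Ioc, mem_Iic, mem_empty_iff_false, iff_false]
        push_neg at hk
        rintro ⟨⟨h1, _⟩, h3⟩
        linarith
      have : μ (U k) = 0 := by
        rw [hU]
        simp only [this, preimage_empty, inter_empty, measure_empty]
      rw [this]
      exact zero_le
  -- V's land inside target
  have hVsub : ∀ k, V k ⊆ {ω | s₂ < X ω * Y ω ∧ Y ω ≤ B} := by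
    intro k ω hω
    obtain ⟨h1, ⟨hy1, hy2⟩⟩ := hω
    rw [mem_preimage, mem_Ioi] at h1
    rw [mem_Ioc] at hy1
    have hpk : (0:ℝ) < r ^ k := zpow_pos hr0 _
    have harg : s₂ * r / r ^ (k+1) = s₂ / r ^ k := by
      rw [zpow_add_one₀ (ne_of_gt hr0)]
      field_simp
    rw [harg] at h1
    refine ⟨?_, hy2⟩
    have h2 : s₂ < X ω * r ^ k := by
      rw [← div_lt_iff₀ hpk]; exact h1
    calc s₂ < X ω * r ^ k := h2
      _ < X ω * Y ω := by
        apply mul_lt_mul_of_pos_left hy1.1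
        have : (0:ℝ) < s₂ / r ^ k := div_pos hs₂ hpk
        linarith
  -- V's are pairwise disjoint
  have hVdisj : Pairwise (Function.onFun Disjoint V) := by
    have key : ∀ a b : ℤ, a < b → Disjoint (V a) (V b) := by
      intro a b hab
      apply Set.disjoint_left.2
      rintro ω ⟨_, ⟨hyk, _⟩⟩ ⟨_, ⟨hyl, _⟩⟩
      rw [mem_Ioc] at hyk hyl
      have : r ^ (a+1) ≤ r ^ b := zpow_le_zpow_right₀ hr.le (by omega)
      linarith [hyk.2, hyl.1]
    intro k l hkl
    rcases lt_or_gt_of_ne hkl with h | h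
    · exact key k l h
    · exact (key l k h).symm
  calc μ {ω | s₁ < X ω * Y ω ∧ Y ω ≤ B} ≤ μ (⋃ k, U k) := measure_mono hsub
    _ ≤ ∑' k, μ (U k) := measure_iUnion_le _
    _ ≤ ∑' k, c * μ (V k) := ENNReal.tsum_le_tsum hUV
    _ = c * ∑' k, μ (V k) := ENNReal.tsum_mul_left
    _ = c * μ (⋃ k, V k) := by rw [measure_iUnion hVdisj hVmeas]
    _ ≤ c * μ {ω | s₂ < X ω * Y ω ∧ Y ω ≤ B} :=
        mul_le_mul_right (measure_mono (iUnion_subset hVsub)) c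


section providers

variable (μ : Measure Ω) [IsProbabilityMeasure μ] (Z : Ω → ℝ)
    {α : ℝ} (hα : 0 < α) {L : ℝ → ℝ}
    (hLpos : ∀ x : ℝ, 0 < x → 0 < L x)
    (hLslow : ∀ x : ℝ, 0 < x → Tendsto (fun t => L (t * x) / L t) atTop (nhds 1))
    (htail : ∀ x : ℝ, 0 < x → (μ {ω | x < |Z ω|}).toReal = x ^ (-α) * L x)

include hα hLpos hLslow htail in
lemma tl_ub_provider {ρ : ℝ} (hρ : 0 < ρ) {c' : ℝ} (hc' : ρ ^ α < c') :
    ∀ᶠ u in atTop, tl μ Z u ≤ ENNReal.ofReal c' * tl μ Z (u * ρ) := by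
  have hrv := tl_rv μ Z hα hLpos hLslow htail hρ
  have hραpos : (0:ℝ) < ρ ^ α := Real.rpow_pos_of_pos hρ α
  have hc'0 : 0 < c' := lt_trans hραpos hc'
  have hkey : (c')⁻¹ < ρ ^ (-α) := by
    rw [Real.rpow_neg hρ.le]
    exact inv_strictAnti₀ hραpos hc'
  have hev := hrv.eventually_const_lt hkey
  filter_upwards [hev, eventually_gt_atTop (0:ℝ)] with u hu hu0
  have hpu : 0 < tlr μ Z u := tlr_pos μ Z hLpos htail hu0
  have hlt : tlr μ Z u < c' * tlr μ Z (u * ρ) := by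
    have h2 : (c')⁻¹ * tlr μ Z u < tlr μ Z (u * ρ) := (lt_div_iff₀ hpu).1 hu
    calc tlr μ Z u = c' * ((c')⁻¹ * tlr μ Z u) := by field_simp
      _ < c' * tlr μ Z (u * ρ) := by
        exact mul_lt_mul_of_pos_left h2 hc'0
  calc tl μ Z u = ENNReal.ofReal (tlr μ Z u) := (ofReal_tlr μ Z u).symm
    _ ≤ ENNReal.ofReal (c' * tlr μ Z (u * ρ)) := ENNReal.ofReal_le_ofReal hlt.le
    _ = ENNReal.ofReal c' * ENNReal.ofReal (tlr μ Z (u * ρ)) := ENNReal.ofReal_mul hc'0.le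
    _ = ENNReal.ofReal c' * tl μ Z (u * ρ) := by rw [ofReal_tlr]

include hα hLpos hLslow htail in
lemma tlr_bounds {ρ : ℝ} (hρ : 0 < ρ) {lo hi : ℝ} (hlo : lo < ρ ^ (-α)) (hhi : ρ ^ (-α) < hi) :
    ∀ᶠ u in atTop,
      lo * tlr μ Z u ≤ tlr μ Z (u * ρ) ∧ tlr μ Z (u * ρ) ≤ hi * tlr μ Z u := by
  have hrv := tl_rv μ Z hα hLpos hLslow htail hρ
  filter_upwards [hrv.eventually (Ioo_mem_nhds hlo hhi), eventually_gt_atTop (0:ℝ)]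
    with u h hu0
  have hpu : 0 < tlr μ Z u := tlr_pos μ Z hLpos htail hu0
  exact ⟨((lt_div_iff₀ hpu).1 h.1).le, ((div_lt_iff₀ hpu).1 h.2).le⟩

end providers

section main

variable (μ : Measure Ω) [IsProbabilityMeasure μ] (Z₁ Z₂ : Ω → ℝ)
    (hZ₁ : Measurable Z₁) (hZ₂ : Measurable Z₂)
    (hindep : IndepFun Z₁ Z₂ μ)
    {α : ℝ} (hα : 0 < α) {L₁ L₂ : ℝ → ℝ}
    (hL₁pos : ∀ x : ℝ, 0 < x → 0 < L₁ x) (hL₂pos : ∀ x : ℝ, 0 < x → 0 < L₂ x)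
    (hL₁slow : ∀ x : ℝ, 0 < x → Tendsto (fun t => L₁ (t * x) / L₁ t) atTop (nhds 1))
    (hL₂slow : ∀ x : ℝ, 0 < x → Tendsto (fun t => L₂ (t * x) / L₂ t) atTop (nhds 1))
    (htail₁ : ∀ x : ℝ, 0 < x → (μ {ω | x < |Z₁ ω|}).toReal = x ^ (-α) * L₁ x)
    (htail₂ : ∀ x : ℝ, 0 < x → (μ {ω | x < |Z₂ ω|}).toReal = x ^ (-α) * L₂ x)

include hindep in
lemma hind_abs : ∀ A B : Set ℝ, MeasurableSet A → MeasurableSet B →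
    μ ((fun ω => |Z₁ ω|) ⁻¹' A ∩ (fun ω => |Z₂ ω|) ⁻¹' B) =
      μ ((fun ω => |Z₁ ω|) ⁻¹' A) * μ ((fun ω => |Z₂ ω|) ⁻¹' B) := fun A B hA hB =>
  (hindep.comp measurable_abs measurable_abs).measure_inter_preimage_eq_mul A B hA hB

include hZ₁ hZ₂ hindep hα hL₁pos hL₂pos hL₁slow hL₂slow htail₁ htail₂ in
set_option maxHeartbeats 1000000 in
lemma diag_small {ε : ℝ} (hε : 0 < ε) :
    ∀ᶠ t in atTop,
      tl μ Z₁ (Real.sqrt t) * tl μ Z₂ (Real.sqrt t)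
        ≤ ENNReal.ofReal ε * μ {ω | t < |Z₁ ω| * |Z₂ ω|} := by
  set q : ℝ := (2:ℝ) ^ (-α) with hqdef
  set Q : ℝ := (2:ℝ) ^ α with hQdef
  have hq1 : q < 1 := Real.rpow_lt_one_of_one_lt_of_neg one_lt_two (neg_lt_zero.2 hα)
  have hqpos : 0 < q := Real.rpow_pos_of_pos two_pos _
  have hQpos : 0 < Q := Real.rpow_pos_of_pos two_pos _
  have hqQ : q * Q = 1 := by
    rw [hqdef, hQdef, ← Real.rpow_add two_pos]
    simp
  set c₀ : ℝ := (1 - q) / 4 with hc₀def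
  have hc₀pos : 0 < c₀ := by rw [hc₀def]; linarith
  obtain ⟨m, hm⟩ := exists_nat_gt (1 / (ε * c₀))
  -- rpow values of powers of two
  have hP : ∀ j : ℕ, ((2:ℝ) ^ j) ^ (-α) = q ^ j := by
    intro j
    rw [← Real.rpow_natCast (2:ℝ) j, ← Real.rpow_mul (by norm_num), mul_comm,
      Real.rpow_mul (by norm_num), Real.rpow_natCast]
  have hPinv : ∀ j : ℕ, (((2:ℝ) ^ j)⁻¹) ^ (-α) = Q ^ j := by
    intro j
    rw [← Real.rpow_neg_one ((2:ℝ)^j), ← Real.rpow_natCast (2:ℝ) j,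
      ← Real.rpow_mul (by norm_num), ← Real.rpow_mul (by norm_num)]
    rw [hQdef, ← Real.rpow_natCast ((2:ℝ)^α) j, ← Real.rpow_mul (by norm_num)]
    ring_nf
  -- per-j eventual bounds
  have hj : ∀ j : ℕ, ∀ᶠ s : ℝ in atTop,
      ((q ^ j - q ^ j * (1 - q) / 4) * tlr μ Z₁ s ≤ tlr μ Z₁ (s * 2 ^ j)) ∧
      (tlr μ Z₁ (s * 2 ^ (j+1)) ≤ (q ^ (j+1) + q ^ j * (1 - q) / 4) * tlr μ Z₁ s) ∧
      ((Q ^ j / 2) * tlr μ Z₂ s ≤ tlr μ Z₂ (s * ((2:ℝ) ^ j)⁻¹)) := by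
    intro j
    have hδpos : 0 < q ^ j * (1 - q) / 4 := by
      have := pow_pos hqpos j
      nlinarith
    have hb1 := tlr_bounds μ Z₁ hα hL₁pos hL₁slow htail₁
      (ρ := (2:ℝ) ^ j) (by positivity)
      (lo := q ^ j - q ^ j * (1 - q) / 4) (hi := q ^ j + 1)
      (by rw [hP]; linarith) (by rw [hP]; linarith)
    have hb2 := tlr_bounds μ Z₁ hα hL₁pos hL₁slow htail₁
      (ρ := (2:ℝ) ^ (j+1)) (by positivity)
      (lo := q ^ (j+1) - 1) (hi := q ^ (j+1) + q ^ j * (1 - q) / 4)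
      (by rw [hP]; linarith) (by rw [hP]; linarith)
    have hb3 := tlr_bounds μ Z₂ hα hL₂pos hL₂slow htail₂
      (ρ := ((2:ℝ) ^ j)⁻¹) (by positivity)
      (lo := Q ^ j / 2) (hi := Q ^ j + 1)
      (by rw [hPinv]; nlinarith [pow_pos hQpos j]) (by rw [hPinv]; linarith)
    filter_upwards [hb1, hb2, hb3] with s h1 h2 h3
    exact ⟨h1.1, h2.2, h3.1⟩
  have hall := (eventually_all_finset (Finset.range m)).2 (fun j _ => hj j)
  filter_upwards [sqrt_tendsto_atTop.eventually hall, eventually_gt_atTop (0:ℝ)]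
    with t hE ht0
  set s := Real.sqrt t with hsdef
  have hs0 : 0 < s := Real.sqrt_pos.2 ht0
  have hss : s * s = t := Real.mul_self_sqrt ht0.le
  -- the blocks
  set A : ℕ → Set Ω := fun j =>
    (fun ω => |Z₁ ω|) ⁻¹' Ioc (s * 2 ^ j) (s * 2 ^ (j+1)) ∩
    (fun ω => |Z₂ ω|) ⁻¹' Ioi (s * ((2:ℝ) ^ j)⁻¹) with hAdef
  have hAmeas : ∀ j, MeasurableSet (A j) := fun j =>
    ((hZ₁.abs) measurableSet_Ioc).inter ((hZ₂.abs) measurableSet_Ioi)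
  have hAval : ∀ j, (μ (A j)).toReal =
      (tlr μ Z₁ (s * 2 ^ j) - tlr μ Z₁ (s * 2 ^ (j+1))) * tlr μ Z₂ (s * ((2:ℝ) ^ j)⁻¹) := by
    intro j
    have hIoc : ((fun ω => |Z₁ ω|) ⁻¹' Ioc (s * 2 ^ j) (s * 2 ^ (j+1))) =
        ((fun ω => |Z₁ ω|) ⁻¹' Ioi (s * 2 ^ j)) \ ((fun ω => |Z₁ ω|) ⁻¹' Ioi (s * 2 ^ (j+1))) := by
      rw [← preimage_diff, Ioi_diff_Ioi]
    have hle : s * 2 ^ j ≤ s * 2 ^ (j+1) := by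
      have : (2:ℝ) ^ j ≤ 2 ^ (j+1) := by
        apply pow_le_pow_right₀ (by norm_num) (by omega)
      nlinarith
    have hsubset : ((fun ω => |Z₁ ω|) ⁻¹' Ioi (s * 2 ^ (j+1))) ⊆
        ((fun ω => |Z₁ ω|) ⁻¹' Ioi (s * 2 ^ j)) :=
      fun ω hω => lt_of_le_of_lt hle hω
    have hdiff : μ ((fun ω => |Z₁ ω|) ⁻¹' Ioc (s * 2 ^ j) (s * 2 ^ (j+1))) =
        tl μ Z₁ (s * 2 ^ j) - tl μ Z₁ (s * 2 ^ (j+1)) := by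
      rw [hIoc, measure_diff hsubset ((hZ₁.abs) measurableSet_Ioi).nullMeasurableSet
        (measure_ne_top μ _)]
      rfl
    rw [hAdef]
    rw [hind_abs μ Z₁ Z₂ hindep _ _ measurableSet_Ioc measurableSet_Ioi, hdiff]
    rw [ENNReal.toReal_mul,
      ENNReal.toReal_sub_of_le (tl_anti μ Z₁ hle) (tl_ne_top μ Z₁ _)]
    rfl
  -- lower bound on each block
  have h3 : ∀ j ∈ Finset.range m, c₀ * (tlr μ Z₁ s * tlr μ Z₂ s) ≤ (μ (A j)).toReal := by
    intro j hjm
    obtain ⟨b1, b2, b3⟩ := hE j hjm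
    rw [hAval j]
    have htlr1 : 0 ≤ tlr μ Z₁ s := ENNReal.toReal_nonneg
    have htlr2 : 0 ≤ tlr μ Z₂ s := ENNReal.toReal_nonneg
    have hdiffge : (q ^ j * (1 - q) / 2) * tlr μ Z₁ s ≤
        tlr μ Z₁ (s * 2 ^ j) - tlr μ Z₁ (s * 2 ^ (j+1)) := by
      have hrel : (q ^ j - q ^ j * (1 - q) / 4) * tlr μ Z₁ s
          - (q ^ (j+1) + q ^ j * (1 - q) / 4) * tlr μ Z₁ s
          = q ^ j * (1 - q) / 2 * tlr μ Z₁ s := by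
        rw [pow_succ]; ring
      linarith [b1, b2, hrel]
    have hqQj : q ^ j * Q ^ j = 1 := by rw [← mul_pow, hqQ, one_pow]
    have hco : (q ^ j * (1 - q) / 2) * (Q ^ j / 2) = c₀ := by
      calc (q ^ j * (1 - q) / 2) * (Q ^ j / 2) = (q ^ j * Q ^ j) * ((1 - q) / 4) := by ring
        _ = c₀ := by rw [hqQj, hc₀def]; ring
    calc c₀ * (tlr μ Z₁ s * tlr μ Z₂ s)
        = ((q ^ j * (1 - q) / 2) * tlr μ Z₁ s) * ((Q ^ j / 2) * tlr μ Z₂ s) := by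
          rw [← hco]; ring
      _ ≤ (tlr μ Z₁ (s * 2 ^ j) - tlr μ Z₁ (s * 2 ^ (j+1))) * tlr μ Z₂ (s * ((2:ℝ) ^ j)⁻¹) := by
          have hc1 : 0 ≤ q ^ j * (1 - q) / 2 := by
            have := pow_nonneg hqpos.le j
            nlinarith
          have hb0 : 0 ≤ (q ^ j * (1 - q) / 2) * tlr μ Z₁ s := mul_nonneg hc1 htlr1
          exact mul_le_mul hdiffge b3 (mul_nonneg (by positivity) htlr2)
            (le_trans hb0 hdiffge)
  -- blocks disjoint
  have hAdisj : Set.PairwiseDisjoint (↑(Finset.range m)) A := by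
    have key : ∀ a b : ℕ, a < b → Disjoint (A a) (A b) := by
      intro a b hab
      apply Set.disjoint_left.2
      rintro ω ⟨h1, _⟩ ⟨h2, _⟩
      rw [mem_preimage, mem_Ioc] at h1 h2
      have hle : s * 2 ^ (a+1) ≤ s * 2 ^ b := by
        have : (2:ℝ) ^ (a+1) ≤ 2 ^ b := pow_le_pow_right₀ (by norm_num) (by omega)
        nlinarith
      linarith [h1.2, h2.1]
    intro a _ b _ hab
    rcases lt_or_gt_of_ne hab with h | h
    · exact key a b h
    · exact (key b a h).symm
  -- blocks inside the product tail event
  have hAsub : ∀ j, A j ⊆ {ω | t < |Z₁ ω| * |Z₂ ω|} := by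
    intro j ω hω
    obtain ⟨h1, h2⟩ := hω
    rw [mem_preimage, mem_Ioc] at h1
    rw [mem_preimage, mem_Ioi] at h2
    have hp1 : (0:ℝ) < s * 2 ^ j := by positivity
    have hp2 : (0:ℝ) < s * ((2:ℝ) ^ j)⁻¹ := by positivity
    have : (s * 2 ^ j) * (s * ((2:ℝ) ^ j)⁻¹) < |Z₁ ω| * |Z₂ ω| :=
      mul_lt_mul'' h1.1 h2 hp1.le hp2.le
    have heq : (s * 2 ^ j) * (s * ((2:ℝ) ^ j)⁻¹) = t := by
      field_simp
      nlinarith [hss]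
    rw [heq] at this
    exact this
  -- sum up
  have hsum : (m : ℝ) * (c₀ * (tlr μ Z₁ s * tlr μ Z₂ s)) ≤
      (μ {ω | t < |Z₁ ω| * |Z₂ ω|}).toReal := by
    have h5 : μ (⋃ j ∈ Finset.range m, A j) ≤ μ {ω | t < |Z₁ ω| * |Z₂ ω|} :=
      measure_mono (Set.iUnion₂_subset fun j _ => hAsub j)
    have h6 : μ (⋃ j ∈ Finset.range m, A j) = ∑ j ∈ Finset.range m, μ (A j) :=
      measure_biUnion_finset hAdisj (fun j _ => hAmeas j)
    have h7 : ∑ j ∈ Finset.range m, (μ (A j)).toReal ≤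
        (μ {ω | t < |Z₁ ω| * |Z₂ ω|}).toReal := by
      rw [← ENNReal.toReal_sum (fun j _ => measure_ne_top μ _), ← h6]
      exact ENNReal.toReal_mono (measure_ne_top μ _) h5
    calc (m : ℝ) * (c₀ * (tlr μ Z₁ s * tlr μ Z₂ s))
        = ∑ _j ∈ Finset.range m, c₀ * (tlr μ Z₁ s * tlr μ Z₂ s) := by
          rw [Finset.sum_const, Finset.card_range, nsmul_eq_mul]
      _ ≤ ∑ j ∈ Finset.range m, (μ (A j)).toReal := Finset.sum_le_sum h3
      _ ≤ _ := h7
  -- conclude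
  have hεm : 1 ≤ ε * c₀ * (m:ℝ) := by
    have hm0 : 0 < (m:ℝ) := lt_trans (div_pos one_pos (mul_pos hε hc₀pos)) hm
    rw [div_lt_iff₀ (mul_pos hε hc₀pos)] at hm
    linarith
  have hDr : 0 ≤ tlr μ Z₁ s * tlr μ Z₂ s := mul_nonneg ENNReal.toReal_nonneg ENNReal.toReal_nonneg
  have hfinal : tlr μ Z₁ s * tlr μ Z₂ s ≤ ε * (μ {ω | t < |Z₁ ω| * |Z₂ ω|}).toReal := by
    have h1 : ε * ((m:ℝ) * (c₀ * (tlr μ Z₁ s * tlr μ Z₂ s)))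
        ≤ ε * (μ {ω | t < |Z₁ ω| * |Z₂ ω|}).toReal :=
      mul_le_mul_of_nonneg_left hsum hε.le
    have h2 : 0 ≤ (ε * c₀ * (m:ℝ) - 1) * (tlr μ Z₁ s * tlr μ Z₂ s) :=
      mul_nonneg (by linarith) hDr
    nlinarith [h1, h2]
  calc tl μ Z₁ s * tl μ Z₂ s
      = ENNReal.ofReal (tlr μ Z₁ s * tlr μ Z₂ s) := by
        rw [ENNReal.ofReal_mul (tlr_nonneg μ Z₁ s), ofReal_tlr, ofReal_tlr]
    _ ≤ ENNReal.ofReal (ε * (μ {ω | t < |Z₁ ω| * |Z₂ ω|}).toReal) :=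
        ENNReal.ofReal_le_ofReal hfinal
    _ = ENNReal.ofReal ε * ENNReal.ofReal ((μ {ω | t < |Z₁ ω| * |Z₂ ω|}).toReal) :=
        ENNReal.ofReal_mul hε.le
    _ = ENNReal.ofReal ε * μ {ω | t < |Z₁ ω| * |Z₂ ω|} := by
        rw [ENNReal.ofReal_toReal (measure_ne_top μ _)]

include hindep hL₁pos hL₂pos htail₁ htail₂ in
lemma pt_pos {t : ℝ} (ht : 0 < t) : μ {ω | t < |Z₁ ω| * |Z₂ ω|} ≠ 0 := by
  have heq := hind_abs μ Z₁ Z₂ hindep (Ioi t) (Ioi 1) measurableSet_Ioi measurableSet_Ioi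
  have h1 : tl μ Z₁ t ≠ 0 := tl_ne_zero μ Z₁ hL₁pos htail₁ ht
  have h2 : tl μ Z₂ 1 ≠ 0 := tl_ne_zero μ Z₂ hL₂pos htail₂ one_pos
  intro h0
  have hsub : ((fun ω => |Z₁ ω|) ⁻¹' Ioi t ∩ (fun ω => |Z₂ ω|) ⁻¹' Ioi 1)
      ⊆ {ω | t < |Z₁ ω| * |Z₂ ω|} := by
    rintro ω ⟨ha, hb⟩
    rw [mem_preimage, mem_Ioi] at ha hb
    have : t * 1 < |Z₁ ω| * |Z₂ ω| := mul_lt_mul'' ha hb ht.le (by norm_num)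
    simpa using this
  have hz : μ ((fun ω => |Z₁ ω|) ⁻¹' Ioi t ∩ (fun ω => |Z₂ ω|) ⁻¹' Ioi 1) = 0 :=
    measure_mono_null hsub h0
  rw [heq] at hz
  exact (mul_ne_zero h1 h2) hz

include hZ₁ hZ₂ hindep hα hL₁pos hL₂pos hL₁slow hL₂slow htail₁ htail₂ in
set_option maxHeartbeats 1000000 in
lemma ratio_upper {x b : ℝ} (hx : 1 < x) (hb : x ^ (-α) < b) :
    ∀ᶠ t in atTop, (μ {ω | t * x < |Z₁ ω| * |Z₂ ω|}).toReal
      < b * (μ {ω | t < |Z₁ ω| * |Z₂ ω|}).toReal := by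
  have hx0 : (0:ℝ) < x := lt_trans one_pos hx
  have hxα : (0:ℝ) < x ^ α := Real.rpow_pos_of_pos hx0 α
  have hxnegα : x ^ (-α) = (x ^ α)⁻¹ := by
    rw [Real.rpow_neg hx0.le]
  have hxnegαpos : (0:ℝ) < x ^ (-α) := Real.rpow_pos_of_pos hx0 _
  set ε : ℝ := (b - x ^ (-α)) / 3 with hεdef
  have hε : 0 < ε := by rw [hεdef]; linarith
  set K : ℝ := 1 + ε * x ^ α / 2 with hKdef
  have hK1 : 1 < K := by rw [hKdef]; nlinarith
  set r : ℝ := K ^ α⁻¹ with hrdef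
  have hr1 : 1 < r := by
    rw [hrdef]
    exact Real.one_lt_rpow_iff_of_pos (by linarith) |>.2 (Or.inl ⟨hK1, by positivity⟩)
  have hr0 : (0:ℝ) < r := lt_trans one_pos hr1
  have hrα : r ^ α = K := by
    rw [hrdef, ← Real.rpow_mul (by linarith), inv_mul_cancel₀ (ne_of_gt hα), Real.rpow_one]
  set c₁ : ℝ := x ^ (-α) + ε with hc₁def
  have hc₁pos : 0 < c₁ := by rw [hc₁def]; linarith
  have hρα : (r / x) ^ α < c₁ := by
    rw [Real.div_rpow hr0.le hx0.le, hrα, hc₁def, hxnegα, div_lt_iff₀ hxα, hKdef]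
    have hinv : (x ^ α)⁻¹ * x ^ α = 1 := inv_mul_cancel₀ (ne_of_gt hxα)
    nlinarith
  have hprov₁ := tl_ub_provider μ Z₁ hα hL₁pos hL₁slow htail₁ (ρ := r / x)
    (by positivity) (c' := c₁) hρα
  have hprov₂ := tl_ub_provider μ Z₂ hα hL₂pos hL₂slow htail₂ (ρ := r / x)
    (by positivity) (c' := c₁) hρα
  obtain ⟨T₀, hT₀⟩ := eventually_atTop.1 (hprov₁.and hprov₂)
  have hthr : ∀ᶠ t : ℝ in atTop, T₀ ≤ Real.sqrt t * (1 / r) :=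
    (sqrt_tendsto_atTop.atTop_mul_const (by positivity)).eventually_ge_atTop T₀
  have hdiag := diag_small μ Z₁ Z₂ hZ₁ hZ₂ hindep hα hL₁pos hL₂pos hL₁slow hL₂slow
    htail₁ htail₂ hε
  filter_upwards [hdiag, hthr, eventually_gt_atTop (0:ℝ)] with t hdg hth ht0
  set s := Real.sqrt t with hsdef
  have hs0 : 0 < s := Real.sqrt_pos.2 ht0
  have hss : s * s = t := Real.mul_self_sqrt ht0.le
  set M := μ {ω | t < |Z₁ ω| * |Z₂ ω|} with hMdef
  have hMne : M ≠ ⊤ := measure_ne_top μ _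
  -- block lemma, first orientation
  have hfac : t * r / (t * x) = r / x := by
    rw [mul_div_mul_left _ _ (ne_of_gt ht0)]
  have hterm₁ : ∀ u : ℝ, t * x / (s * r) ≤ u →
      μ ((fun ω => |Z₁ ω|) ⁻¹' Ioi u)
        ≤ ENNReal.ofReal c₁ * μ ((fun ω => |Z₁ ω|) ⁻¹' Ioi (u * (t * r / (t * x)))) := by
    intro u hu
    have hthresh : T₀ ≤ u := by
      have h1 : s * (1 / r) ≤ t * x / (s * r) := by
        have hsne : s ≠ 0 := ne_of_gt hs0
        have hrne : r ≠ 0 := ne_of_gt hr0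
        have heq : t * x / (s * r) = s * x / r := by
          rw [← hss]
          field_simp
        rw [mul_one_div, heq]
        gcongr
        nlinarith
      linarith [hth]
    rw [hfac]
    exact (hT₀ u hthresh).1
  have hterm₂ : ∀ u : ℝ, t * x / (s * r) ≤ u →
      μ ((fun ω => |Z₂ ω|) ⁻¹' Ioi u)
        ≤ ENNReal.ofReal c₁ * μ ((fun ω => |Z₂ ω|) ⁻¹' Ioi (u * (t * r / (t * x)))) := by
    intro u hu
    have hthresh : T₀ ≤ u := by
      have h1 : s * (1 / r) ≤ t * x / (s * r) := by
        have hsne : s ≠ 0 := ne_of_gt hs0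
        have hrne : r ≠ 0 := ne_of_gt hr0
        have heq : t * x / (s * r) = s * x / r := by
          rw [← hss]
          field_simp
        rw [mul_one_div, heq]
        gcongr
        nlinarith
      linarith [hth]
    rw [hfac]
    exact (hT₀ u hthresh).2
  have happ₁ := blockLemma μ (fun ω => |Z₁ ω|) (fun ω => |Z₂ ω|) hZ₁.abs hZ₂.abs
    (fun ω => abs_nonneg _) (hind_abs μ Z₁ Z₂ hindep) r s (t * x) t hr1 hs0
    (by positivity) ht0 (ENNReal.ofReal c₁) hterm₁
  have happ₂ := blockLemma μ (fun ω => |Z₂ ω|) (fun ω => |Z₁ ω|) hZ₂.abs hZ₁.abs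
    (fun ω => abs_nonneg _) (hind_abs μ Z₂ Z₁ hindep.symm) r s (t * x) t hr1 hs0
    (by positivity) ht0 (ENNReal.ofReal c₁) hterm₂
  have hcomm : ∀ a : ℝ, {ω | a < |Z₂ ω| * |Z₁ ω| ∧ |Z₁ ω| ≤ s}
      = {ω | a < |Z₁ ω| * |Z₂ ω| ∧ |Z₁ ω| ≤ s} := by
    intro a
    ext ω
    simp [mul_comm]
  rw [hcomm, hcomm] at happ₂
  -- cover
  have hcover : {ω | t * x < |Z₁ ω| * |Z₂ ω|} ⊆
      ({ω | t * x < |Z₁ ω| * |Z₂ ω| ∧ |Z₂ ω| ≤ s}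
        ∪ {ω | t * x < |Z₁ ω| * |Z₂ ω| ∧ |Z₁ ω| ≤ s})
      ∪ ((fun ω => |Z₁ ω|) ⁻¹' Ioi s ∩ (fun ω => |Z₂ ω|) ⁻¹' Ioi s) := by
    intro ω hω
    by_cases h2 : |Z₂ ω| ≤ s
    · exact Or.inl (Or.inl ⟨hω, h2⟩)
    · by_cases h1 : |Z₁ ω| ≤ s
      · exact Or.inl (Or.inr ⟨hω, h1⟩)
      · push_neg at h1 h2
        exact Or.inr ⟨h1, h2⟩
  have hC : μ ((fun ω => |Z₁ ω|) ⁻¹' Ioi s ∩ (fun ω => |Z₂ ω|) ⁻¹' Ioi s)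
      ≤ ENNReal.ofReal ε * M := by
    rw [hind_abs μ Z₁ Z₂ hindep _ _ measurableSet_Ioi measurableSet_Ioi]
    exact hdg
  -- disjointness of the two target pieces
  have hdisj : Disjoint {ω | t < |Z₁ ω| * |Z₂ ω| ∧ |Z₂ ω| ≤ s}
      {ω | t < |Z₁ ω| * |Z₂ ω| ∧ |Z₁ ω| ≤ s} := by
    rw [Set.disjoint_left]
    rintro ω ⟨hlt, h2⟩ ⟨_, h1⟩
    have : |Z₁ ω| * |Z₂ ω| ≤ s * s := mul_le_mul h1 h2 (abs_nonneg _) hs0.le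
    rw [hss] at this
    linarith
  have hmeas₂ : MeasurableSet {ω | t < |Z₁ ω| * |Z₂ ω| ∧ |Z₁ ω| ≤ s} := by
    exact (measurableSet_lt measurable_const (hZ₁.abs.mul hZ₂.abs)).inter
      (measurableSet_le hZ₁.abs measurable_const)
  have hsum2 : μ {ω | t < |Z₁ ω| * |Z₂ ω| ∧ |Z₂ ω| ≤ s}
      + μ {ω | t < |Z₁ ω| * |Z₂ ω| ∧ |Z₁ ω| ≤ s} ≤ M := by
    rw [← measure_union hdisj hmeas₂]
    apply measure_mono
    rintro ω (⟨h, _⟩ | ⟨h, _⟩) <;> exact h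
  -- total ENNReal bound
  have htotal : μ {ω | t * x < |Z₁ ω| * |Z₂ ω|} ≤ ENNReal.ofReal (c₁ + ε) * M := by
    calc μ {ω | t * x < |Z₁ ω| * |Z₂ ω|}
        ≤ μ ({ω | t * x < |Z₁ ω| * |Z₂ ω| ∧ |Z₂ ω| ≤ s}
            ∪ {ω | t * x < |Z₁ ω| * |Z₂ ω| ∧ |Z₁ ω| ≤ s})
          + μ ((fun ω => |Z₁ ω|) ⁻¹' Ioi s ∩ (fun ω => |Z₂ ω|) ⁻¹' Ioi s) :=
          (measure_mono hcover).trans (measure_union_le _ _)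
      _ ≤ (μ {ω | t * x < |Z₁ ω| * |Z₂ ω| ∧ |Z₂ ω| ≤ s}
            + μ {ω | t * x < |Z₁ ω| * |Z₂ ω| ∧ |Z₁ ω| ≤ s})
          + μ ((fun ω => |Z₁ ω|) ⁻¹' Ioi s ∩ (fun ω => |Z₂ ω|) ⁻¹' Ioi s) :=
          add_le_add_left (measure_union_le _ _) _
      _ ≤ (ENNReal.ofReal c₁ * μ {ω | t < |Z₁ ω| * |Z₂ ω| ∧ |Z₂ ω| ≤ s}
            + ENNReal.ofReal c₁ * μ {ω | t < |Z₁ ω| * |Z₂ ω| ∧ |Z₁ ω| ≤ s})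
          + ENNReal.ofReal ε * M := by
          exact add_le_add (add_le_add happ₁ happ₂) hC
      _ = ENNReal.ofReal c₁ * (μ {ω | t < |Z₁ ω| * |Z₂ ω| ∧ |Z₂ ω| ≤ s}
            + μ {ω | t < |Z₁ ω| * |Z₂ ω| ∧ |Z₁ ω| ≤ s}) + ENNReal.ofReal ε * M := by
          rw [mul_add]
      _ ≤ ENNReal.ofReal c₁ * M + ENNReal.ofReal ε * M := by
          gcongr
      _ = ENNReal.ofReal (c₁ + ε) * M := by
          rw [ENNReal.ofReal_add hc₁pos.le hε.le, add_mul]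
  -- pass to reals
  have hMpos : 0 < M.toReal :=
    ENNReal.toReal_pos (pt_pos μ Z₁ Z₂ hindep hL₁pos hL₂pos htail₁ htail₂ ht0) hMne
  have hreal : (μ {ω | t * x < |Z₁ ω| * |Z₂ ω|}).toReal ≤ (c₁ + ε) * M.toReal := by
    have h1 := ENNReal.toReal_mono
      (ENNReal.mul_ne_top ENNReal.ofReal_ne_top hMne) htotal
    rwa [ENNReal.toReal_mul, ENNReal.toReal_ofReal (by linarith)] at h1
  have hlt : (c₁ + ε) * M.toReal < b * M.toReal := by
    apply mul_lt_mul_of_pos_right ?_ hMpos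
    rw [hc₁def, hεdef]
    linarith
  linarith

include hZ₁ hZ₂ hindep hα hL₁pos hL₂pos hL₁slow hL₂slow htail₁ htail₂ in
set_option maxHeartbeats 1000000 in
lemma ratio_lower {x b : ℝ} (hx : 1 < x) (hb : b < x ^ (-α)) :
    ∀ᶠ t in atTop, b * (μ {ω | t < |Z₁ ω| * |Z₂ ω|}).toReal
      < (μ {ω | t * x < |Z₁ ω| * |Z₂ ω|}).toReal := by
  have hx0 : (0:ℝ) < x := lt_trans one_pos hx
  have hxα : (0:ℝ) < x ^ α := Real.rpow_pos_of_pos hx0 α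
  have hxnegα : x ^ (-α) = (x ^ α)⁻¹ := by rw [Real.rpow_neg hx0.le]
  rcases le_or_gt b 0 with hb0 | hb0
  · -- trivial case : b ≤ 0
    filter_upwards [eventually_gt_atTop (0:ℝ)] with t ht0
    have hNpos : 0 < (μ {ω | t * x < |Z₁ ω| * |Z₂ ω|}).toReal :=
      ENNReal.toReal_pos
        (pt_pos μ Z₁ Z₂ hindep hL₁pos hL₂pos htail₁ htail₂ (by positivity))
        (measure_ne_top μ _)
    have : b * (μ {ω | t < |Z₁ ω| * |Z₂ ω|}).toReal ≤ 0 :=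
      mul_nonpos_of_nonpos_of_nonneg hb0 ENNReal.toReal_nonneg
    linarith
  -- main case : 0 < b
  set θ : ℝ := b * x ^ α with hθdef
  have hθpos : 0 < θ := mul_pos hb0 hxα
  have hθ1 : θ < 1 := by
    rw [hθdef]
    have h1 : b * x ^ α < (x ^ α)⁻¹ * x ^ α := by
      apply mul_lt_mul_of_pos_right ?_ hxα
      rw [← hxnegα]
      exact hb
    rwa [inv_mul_cancel₀ (ne_of_gt hxα)] at h1
  set ε : ℝ := (1 - θ) / 4 with hεdef
  have hε : 0 < ε := by rw [hεdef]; linarith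
  have hε1 : ε < 1 := by rw [hεdef]; linarith
  set K : ℝ := (1 - ε) / θ with hKdef
  have hK1 : 1 < K := by
    rw [hKdef, lt_div_iff₀ hθpos, hεdef]
    linarith
  set mid : ℝ := (1 + K) / 2 with hmiddef
  have hmid1 : 1 < mid := by rw [hmiddef]; linarith
  have hmidK : mid < K := by rw [hmiddef]; linarith
  set r : ℝ := mid ^ α⁻¹ with hrdef
  have hr1 : 1 < r := by
    rw [hrdef]
    exact Real.one_lt_rpow_iff_of_pos (by linarith) |>.2 (Or.inl ⟨hmid1, by positivity⟩)
  have hr0 : (0:ℝ) < r := lt_trans one_pos hr1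
  have hrα : r ^ α = mid := by
    rw [hrdef, ← Real.rpow_mul (by linarith), inv_mul_cancel₀ (ne_of_gt hα), Real.rpow_one]
  set c₂ : ℝ := ((x * r) ^ α + x ^ α * K) / 2 with hc₂def
  have hxrα : (x * r) ^ α = x ^ α * mid := by
    rw [Real.mul_rpow hx0.le hr0.le, hrα]
  have hxrαpos : 0 < (x * r) ^ α := Real.rpow_pos_of_pos (by positivity) α
  have hc₂pos : 0 < c₂ := by
    rw [hc₂def]
    have : 0 < x ^ α * K := by positivity
    linarith
  have hρα : (x * r) ^ α < c₂ := by
    rw [hc₂def, hxrα]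
    have h1 : x ^ α * mid < x ^ α * K := by
      apply mul_lt_mul_of_pos_left hmidK hxα
    linarith
  have hbc₂ : b * c₂ < 1 - ε := by
    have h2 : c₂ < x ^ α * K := by
      rw [hc₂def, hxrα]
      have : x ^ α * mid < x ^ α * K := mul_lt_mul_of_pos_left hmidK hxα
      linarith
    have h3 : x ^ α * K = (1 - ε) / b := by
      rw [hKdef, hθdef]
      field_simp
    rw [h3] at h2
    calc b * c₂ < b * ((1 - ε) / b) := mul_lt_mul_of_pos_left h2 hb0
      _ = 1 - ε := by field_simp
  have hprov₁ := tl_ub_provider μ Z₁ hα hL₁pos hL₁slow htail₁ (ρ := x * r)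
    (by positivity) (c' := c₂) hρα
  have hprov₂ := tl_ub_provider μ Z₂ hα hL₂pos hL₂slow htail₂ (ρ := x * r)
    (by positivity) (c' := c₂) hρα
  obtain ⟨T₀, hT₀⟩ := eventually_atTop.1 (hprov₁.and hprov₂)
  have hthr : ∀ᶠ t : ℝ in atTop, T₀ ≤ Real.sqrt t * (1 / r) :=
    (sqrt_tendsto_atTop.atTop_mul_const (by positivity)).eventually_ge_atTop T₀
  have hdiag := diag_small μ Z₁ Z₂ hZ₁ hZ₂ hindep hα hL₁pos hL₂pos hL₁slow hL₂slow
    htail₁ htail₂ hε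
  filter_upwards [hdiag, hthr, eventually_gt_atTop (0:ℝ)] with t hdg hth ht0
  set s := Real.sqrt t with hsdef
  have hs0 : 0 < s := Real.sqrt_pos.2 ht0
  have hss : s * s = t := Real.mul_self_sqrt ht0.le
  set M := μ {ω | t < |Z₁ ω| * |Z₂ ω|} with hMdef
  set N := μ {ω | t * x < |Z₁ ω| * |Z₂ ω|} with hNdef
  have hMne : M ≠ ⊤ := measure_ne_top μ _
  have hNne : N ≠ ⊤ := measure_ne_top μ _
  have hfac : t * x * r / t = x * r := by
    field_simp
  have hterm₁ : ∀ u : ℝ, t / (s * r) ≤ u →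
      μ ((fun ω => |Z₁ ω|) ⁻¹' Ioi u)
        ≤ ENNReal.ofReal c₂ * μ ((fun ω => |Z₁ ω|) ⁻¹' Ioi (u * (t * x * r / t))) := by
    intro u hu
    have hthresh : T₀ ≤ u := by
      have heq : t / (s * r) = s * (1 / r) := by
        rw [← hss]
        field_simp
      rw [heq] at hu
      linarith [hth]
    rw [hfac]
    exact (hT₀ u hthresh).1
  have hterm₂ : ∀ u : ℝ, t / (s * r) ≤ u →
      μ ((fun ω => |Z₂ ω|) ⁻¹' Ioi u)
        ≤ ENNReal.ofReal c₂ * μ ((fun ω => |Z₂ ω|) ⁻¹' Ioi (u * (t * x * r / t))) := by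
    intro u hu
    have hthresh : T₀ ≤ u := by
      have heq : t / (s * r) = s * (1 / r) := by
        rw [← hss]
        field_simp
      rw [heq] at hu
      linarith [hth]
    rw [hfac]
    exact (hT₀ u hthresh).2
  have happ₁ := blockLemma μ (fun ω => |Z₁ ω|) (fun ω => |Z₂ ω|) hZ₁.abs hZ₂.abs
    (fun ω => abs_nonneg _) (hind_abs μ Z₁ Z₂ hindep) r s t (t * x) hr1 hs0
    ht0 (by positivity) (ENNReal.ofReal c₂) hterm₁
  have happ₂ := blockLemma μ (fun ω => |Z₂ ω|) (fun ω => |Z₁ ω|) hZ₂.abs hZ₁.abs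
    (fun ω => abs_nonneg _) (hind_abs μ Z₂ Z₁ hindep.symm) r s t (t * x) hr1 hs0
    ht0 (by positivity) (ENNReal.ofReal c₂) hterm₂
  have hcomm : ∀ a : ℝ, {ω | a < |Z₂ ω| * |Z₁ ω| ∧ |Z₁ ω| ≤ s}
      = {ω | a < |Z₁ ω| * |Z₂ ω| ∧ |Z₁ ω| ≤ s} := by
    intro a
    ext ω
    simp [mul_comm]
  rw [hcomm, hcomm] at happ₂
  have hcover : {ω | t < |Z₁ ω| * |Z₂ ω|} ⊆
      ({ω | t < |Z₁ ω| * |Z₂ ω| ∧ |Z₂ ω| ≤ s}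
        ∪ {ω | t < |Z₁ ω| * |Z₂ ω| ∧ |Z₁ ω| ≤ s})
      ∪ ((fun ω => |Z₁ ω|) ⁻¹' Ioi s ∩ (fun ω => |Z₂ ω|) ⁻¹' Ioi s) := by
    intro ω hω
    by_cases h2 : |Z₂ ω| ≤ s
    · exact Or.inl (Or.inl ⟨hω, h2⟩)
    · by_cases h1 : |Z₁ ω| ≤ s
      · exact Or.inl (Or.inr ⟨hω, h1⟩)
      · push_neg at h1 h2
        exact Or.inr ⟨h1, h2⟩
  have hC : μ ((fun ω => |Z₁ ω|) ⁻¹' Ioi s ∩ (fun ω => |Z₂ ω|) ⁻¹' Ioi s)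
      ≤ ENNReal.ofReal ε * M := by
    rw [hind_abs μ Z₁ Z₂ hindep _ _ measurableSet_Ioi measurableSet_Ioi]
    exact hdg
  have hdisj : Disjoint {ω | t * x < |Z₁ ω| * |Z₂ ω| ∧ |Z₂ ω| ≤ s}
      {ω | t * x < |Z₁ ω| * |Z₂ ω| ∧ |Z₁ ω| ≤ s} := by
    rw [Set.disjoint_left]
    rintro ω ⟨hlt, h2⟩ ⟨_, h1⟩
    have hp : |Z₁ ω| * |Z₂ ω| ≤ s * s := mul_le_mul h1 h2 (abs_nonneg _) hs0.le
    rw [hss] at hp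
    nlinarith
  have hmeas₂ : MeasurableSet {ω | t * x < |Z₁ ω| * |Z₂ ω| ∧ |Z₁ ω| ≤ s} := by
    exact (measurableSet_lt measurable_const (hZ₁.abs.mul hZ₂.abs)).inter
      (measurableSet_le hZ₁.abs measurable_const)
  have hsum2 : μ {ω | t * x < |Z₁ ω| * |Z₂ ω| ∧ |Z₂ ω| ≤ s}
      + μ {ω | t * x < |Z₁ ω| * |Z₂ ω| ∧ |Z₁ ω| ≤ s} ≤ N := by
    rw [← measure_union hdisj hmeas₂]
    apply measure_mono
    rintro ω (⟨h, _⟩ | ⟨h, _⟩) <;> exact h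
  have htotal : M ≤ ENNReal.ofReal c₂ * N + ENNReal.ofReal ε * M := by
    calc M ≤ μ ({ω | t < |Z₁ ω| * |Z₂ ω| ∧ |Z₂ ω| ≤ s}
            ∪ {ω | t < |Z₁ ω| * |Z₂ ω| ∧ |Z₁ ω| ≤ s})
          + μ ((fun ω => |Z₁ ω|) ⁻¹' Ioi s ∩ (fun ω => |Z₂ ω|) ⁻¹' Ioi s) :=
          (measure_mono hcover).trans (measure_union_le _ _)
      _ ≤ (μ {ω | t < |Z₁ ω| * |Z₂ ω| ∧ |Z₂ ω| ≤ s}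
            + μ {ω | t < |Z₁ ω| * |Z₂ ω| ∧ |Z₁ ω| ≤ s})
          + μ ((fun ω => |Z₁ ω|) ⁻¹' Ioi s ∩ (fun ω => |Z₂ ω|) ⁻¹' Ioi s) :=
          add_le_add_left (measure_union_le _ _) _
      _ ≤ (ENNReal.ofReal c₂ * μ {ω | t * x < |Z₁ ω| * |Z₂ ω| ∧ |Z₂ ω| ≤ s}
            + ENNReal.ofReal c₂ * μ {ω | t * x < |Z₁ ω| * |Z₂ ω| ∧ |Z₁ ω| ≤ s})
          + ENNReal.ofReal ε * M :=
          add_le_add (add_le_add happ₁ happ₂) hC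
      _ = ENNReal.ofReal c₂ * (μ {ω | t * x < |Z₁ ω| * |Z₂ ω| ∧ |Z₂ ω| ≤ s}
            + μ {ω | t * x < |Z₁ ω| * |Z₂ ω| ∧ |Z₁ ω| ≤ s}) + ENNReal.ofReal ε * M := by
          rw [mul_add]
      _ ≤ ENNReal.ofReal c₂ * N + ENNReal.ofReal ε * M := by
          gcongr
  have hMpos : 0 < M.toReal :=
    ENNReal.toReal_pos (pt_pos μ Z₁ Z₂ hindep hL₁pos hL₂pos htail₁ htail₂ ht0) hMne
  have hreal : M.toReal ≤ c₂ * N.toReal + ε * M.toReal := by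
    have hrhs : ENNReal.ofReal c₂ * N + ENNReal.ofReal ε * M ≠ ⊤ :=
      ENNReal.add_ne_top.2 ⟨ENNReal.mul_ne_top ENNReal.ofReal_ne_top hNne,
        ENNReal.mul_ne_top ENNReal.ofReal_ne_top hMne⟩
    have h1 := ENNReal.toReal_mono hrhs htotal
    rwa [ENNReal.toReal_add (ENNReal.mul_ne_top ENNReal.ofReal_ne_top hNne)
        (ENNReal.mul_ne_top ENNReal.ofReal_ne_top hMne),
      ENNReal.toReal_mul, ENNReal.toReal_mul,
      ENNReal.toReal_ofReal hc₂pos.le, ENNReal.toReal_ofReal hε.le] at h1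
  -- conclude
  have hNr : 0 ≤ N.toReal := ENNReal.toReal_nonneg
  nlinarith [hreal, hMpos, hbc₂, hc₂pos, hb0,
    mul_le_mul_of_nonneg_left hreal hb0.le]

include hZ₁ hZ₂ hindep hα hL₁pos hL₂pos hL₁slow hL₂slow htail₁ htail₂ in
lemma ratio_tendsto_gt1 {x : ℝ} (hx : 1 < x) :
    Tendsto (fun t => (μ {ω | t * x < |Z₁ ω| * |Z₂ ω|}).toReal
      / (μ {ω | t < |Z₁ ω| * |Z₂ ω|}).toReal) atTop (nhds (x ^ (-α))) := by
  rw [tendsto_order]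
  constructor
  · intro b hb
    filter_upwards [ratio_lower μ Z₁ Z₂ hZ₁ hZ₂ hindep hα hL₁pos hL₂pos hL₁slow hL₂slow
      htail₁ htail₂ hx hb, eventually_gt_atTop (0:ℝ)] with t h ht0
    have hMpos : 0 < (μ {ω | t < |Z₁ ω| * |Z₂ ω|}).toReal :=
      ENNReal.toReal_pos (pt_pos μ Z₁ Z₂ hindep hL₁pos hL₂pos htail₁ htail₂ ht0)
        (measure_ne_top μ _)
    exact (lt_div_iff₀ hMpos).2 h
  · intro b hb
    filter_upwards [ratio_upper μ Z₁ Z₂ hZ₁ hZ₂ hindep hα hL₁pos hL₂pos hL₁slow hL₂slow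
      htail₁ htail₂ hx hb, eventually_gt_atTop (0:ℝ)] with t h ht0
    have hMpos : 0 < (μ {ω | t < |Z₁ ω| * |Z₂ ω|}).toReal :=
      ENNReal.toReal_pos (pt_pos μ Z₁ Z₂ hindep hL₁pos hL₂pos htail₁ htail₂ ht0)
        (measure_ne_top μ _)
    exact (div_lt_iff₀ hMpos).2 h

include hZ₁ hZ₂ hindep hα hL₁pos hL₂pos hL₁slow hL₂slow htail₁ htail₂ in
lemma ratio_tendsto {x : ℝ} (hx : 0 < x) :
    Tendsto (fun t => (μ {ω | t * x < |Z₁ ω| * |Z₂ ω|}).toReal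
      / (μ {ω | t < |Z₁ ω| * |Z₂ ω|}).toReal) atTop (nhds (x ^ (-α))) := by
  rcases lt_trichotomy x 1 with hx1 | rfl | hx1
  · have hy : 1 < x⁻¹ := (one_lt_inv₀ hx).2 hx1
    have h := ratio_tendsto_gt1 μ Z₁ Z₂ hZ₁ hZ₂ hindep hα hL₁pos hL₂pos hL₁slow hL₂slow
      htail₁ htail₂ hy
    have h2 := h.comp (tendsto_id.atTop_mul_const hx)
    have h3 : ((fun t => (μ {ω | t * x⁻¹ < |Z₁ ω| * |Z₂ ω|}).toReal
        / (μ {ω | t < |Z₁ ω| * |Z₂ ω|}).toReal) ∘ (fun t => id t * x))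
        = fun t => (μ {ω | t < |Z₁ ω| * |Z₂ ω|}).toReal
          / (μ {ω | t * x < |Z₁ ω| * |Z₂ ω|}).toReal := by
      funext t
      simp only [Function.comp_apply, id_eq]
      rw [mul_inv_cancel_right₀ (ne_of_gt hx)]
    rw [h3] at h2
    have h4 := h2.inv₀ (ne_of_gt (Real.rpow_pos_of_pos (by positivity) _))
    have h5 : (fun t => ((μ {ω | t < |Z₁ ω| * |Z₂ ω|}).toReal
        / (μ {ω | t * x < |Z₁ ω| * |Z₂ ω|}).toReal)⁻¹)
        = fun t => (μ {ω | t * x < |Z₁ ω| * |Z₂ ω|}).toReal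
          / (μ {ω | t < |Z₁ ω| * |Z₂ ω|}).toReal := by
      funext t
      rw [inv_div]
    rw [h5] at h4
    rwa [Real.inv_rpow hx.le, inv_inv] at h4
  · rw [Real.one_rpow]
    apply Tendsto.congr' _ (tendsto_const_nhds (α := ℝ) (x := 1))
    filter_upwards [eventually_gt_atTop (0:ℝ)] with t ht0
    have hMpos : 0 < (μ {ω | t < |Z₁ ω| * |Z₂ ω|}).toReal :=
      ENNReal.toReal_pos (pt_pos μ Z₁ Z₂ hindep hL₁pos hL₂pos htail₁ htail₂ ht0)
        (measure_ne_top μ _)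
    rw [mul_one, div_self (ne_of_gt hMpos)]
  · exact ratio_tendsto_gt1 μ Z₁ Z₂ hZ₁ hZ₂ hindep hα hL₁pos hL₂pos hL₁slow hL₂slow
      htail₁ htail₂ hx1

end main

end EGProd

open EGProd

/-- (Embrechts–Goldie) The product of two independent random variables,
each with regularly varying tail of index `-α`, has regularly varying tail of index `-α`:
there is a slowly varying `L₁` with `P(|Z₁ Z₂| > x) = x^{-α} L₁(x)` for `x > 0`. -/
theorem stmt4 {Ω : Type*} [MeasurableSpace Ω] (μ : Measure Ω) [IsProbabilityMeasure μ]
    (Z₁ Z₂ : Ω → ℝ) (hZ₁ : Measurable Z₁) (hZ₂ : Measurable Z₂)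
    (hindep : IndepFun Z₁ Z₂ μ)
    (α : ℝ) (hα : 0 < α)
    (L₁ L₂ : ℝ → ℝ)
    (hL₁pos : ∀ x : ℝ, 0 < x → 0 < L₁ x) (hL₂pos : ∀ x : ℝ, 0 < x → 0 < L₂ x)
    (hL₁slow : ∀ x : ℝ, 0 < x → Tendsto (fun t => L₁ (t * x) / L₁ t) atTop (nhds 1))
    (hL₂slow : ∀ x : ℝ, 0 < x → Tendsto (fun t => L₂ (t * x) / L₂ t) atTop (nhds 1))
    (htail₁ : ∀ x : ℝ, 0 < x → (μ {ω | x < |Z₁ ω|}).toReal = x ^ (-α) * L₁ x)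
    (htail₂ : ∀ x : ℝ, 0 < x → (μ {ω | x < |Z₂ ω|}).toReal = x ^ (-α) * L₂ x) :
    ∃ L₃ : ℝ → ℝ, (∀ x : ℝ, 0 < x → 0 < L₃ x) ∧
      (∀ x : ℝ, 0 < x → Tendsto (fun t => L₃ (t * x) / L₃ t) atTop (nhds 1)) ∧
      (∀ x : ℝ, 0 < x → (μ {ω | x < |Z₁ ω * Z₂ ω|}).toReal = x ^ (-α) * L₃ x) := by
  have habs : ∀ u : ℝ, {ω | u < |Z₁ ω * Z₂ ω|} = {ω | u < |Z₁ ω| * |Z₂ ω|} := by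
    intro u
    ext ω
    simp [abs_mul]
  refine ⟨fun u => u ^ α * (μ {ω | u < |Z₁ ω * Z₂ ω|}).toReal, ?_, ?_, ?_⟩
  · intro u hu
    simp only [habs]
    exact mul_pos (Real.rpow_pos_of_pos hu _)
      (ENNReal.toReal_pos (pt_pos μ Z₁ Z₂ hindep hL₁pos hL₂pos htail₁ htail₂ hu)
        (measure_ne_top μ _))
  · intro x hx
    simp only [habs]
    have hr := ratio_tendsto μ Z₁ Z₂ hZ₁ hZ₂ hindep hα hL₁pos hL₂pos hL₁slow hL₂slow
      htail₁ htail₂ hx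
    have h1 := hr.const_mul (x ^ α)
    have hval : x ^ α * x ^ (-α) = 1 := by
      rw [← Real.rpow_add hx, add_neg_cancel, Real.rpow_zero]
    rw [hval] at h1
    apply Tendsto.congr' _ h1
    filter_upwards [eventually_gt_atTop (0:ℝ)] with t ht0
    have htα : (0:ℝ) < t ^ α := Real.rpow_pos_of_pos ht0 _
    calc x ^ α * ((μ {ω | t * x < |Z₁ ω| * |Z₂ ω|}).toReal
            / (μ {ω | t < |Z₁ ω| * |Z₂ ω|}).toReal)
        = (t ^ α * (x ^ α * (μ {ω | t * x < |Z₁ ω| * |Z₂ ω|}).toReal))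
          / (t ^ α * (μ {ω | t < |Z₁ ω| * |Z₂ ω|}).toReal) := by
          rw [mul_div_mul_left _ _ (ne_of_gt htα)]
          rw [mul_div_assoc]
      _ = (t * x) ^ α * (μ {ω | t * x < |Z₁ ω| * |Z₂ ω|}).toReal
          / (t ^ α * (μ {ω | t < |Z₁ ω| * |Z₂ ω|}).toReal) := by
          rw [Real.mul_rpow ht0.le hx.le]
          ring
  · intro u hu
    rw [← mul_assoc, ← Real.rpow_add hu, neg_add_cancel, Real.rpow_zero, one_mul]
end

section
/- Let X be a p×n random matrix whose entries are identically distributed with regularly varying tails of index α ∈ (0,1) and normalizing sequence a_n, with independent rows. If limsup p_n / n^β < ∞ for some β < ∞ and p_n → ∞, then a_{np}^{-2} ‖X X^T − diag(X X^T)‖_2 → 0 in probability. -/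
open MeasureTheory ProbabilityTheory Filter Real Matrix
open scoped ENNReal

noncomputable section

/-- The operator 2-norm (spectral norm) of a real matrix, viewed as a linear map
between Euclidean spaces. -/
def l2OpNorm {m n : ℕ} (A : Matrix (Fin m) (Fin n) ℝ) : ℝ :=
  ‖LinearMap.toContinuousLinearMap (Matrix.toEuclideanLin A)‖

lemma l2OpNorm_le_sum_abs {m n : ℕ} (A : Matrix (Fin m) (Fin n) ℝ) :
    l2OpNorm A ≤ ∑ i, ∑ j, |A i j| := by
  refine ContinuousLinearMap.opNorm_le_bound _
    (Finset.sum_nonneg fun i _ => Finset.sum_nonneg fun j _ => abs_nonneg _) (fun x => ?_)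
  have happ : ∀ i, (LinearMap.toContinuousLinearMap (Matrix.toEuclideanLin A)) x i
      = ∑ j, A i j * x j := by
    intro i
    rfl
  have hxj : ∀ j, |x j| ≤ ‖x‖ := by
    intro j
    have := EuclideanSpace.norm_eq x
    have h1 : |x j| = Real.sqrt ((x j)^2) := by
      rw [Real.sqrt_sq_eq_abs]
    rw [h1, this]
    apply Real.sqrt_le_sqrt
    have : ‖x j‖^2 = (x j)^2 := by simp [sq_abs]
    calc (x j)^2 = ‖x j‖^2 := by simp [sq_abs]
    _ ≤ ∑ i, ‖x i‖^2 := Finset.single_le_sum (f := fun i => ‖x i‖^2)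
        (fun i _ => sq_nonneg _) (Finset.mem_univ j)
  set y := (LinearMap.toContinuousLinearMap (Matrix.toEuclideanLin A)) x with hy
  have hyi : ∀ i, |y i| ≤ (∑ j, |A i j|) * ‖x‖ := by
    intro i
    rw [happ i]
    calc |∑ j, A i j * x j| ≤ ∑ j, |A i j * x j| := Finset.abs_sum_le_sum_abs _ _
    _ = ∑ j, |A i j| * |x j| := by simp [abs_mul]
    _ ≤ ∑ j, |A i j| * ‖x‖ := Finset.sum_le_sum fun j _ =>
        mul_le_mul_of_nonneg_left (hxj j) (abs_nonneg _)
    _ = (∑ j, |A i j|) * ‖x‖ := by rw [Finset.sum_mul]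
  have hnorm : ‖y‖ ≤ ∑ i, |y i| := by
    rw [EuclideanSpace.norm_eq]
    have : ∑ i, ‖y i‖^2 ≤ (∑ i, |y i|)^2 := by
      simpa [Real.norm_eq_abs] using
        Finset.sum_sq_le_sq_sum_of_nonneg (s := Finset.univ) (f := fun i => |y i|)
          (fun i _ => abs_nonneg _)
    calc Real.sqrt (∑ i, ‖y i‖^2) ≤ Real.sqrt ((∑ i, |y i|)^2) := Real.sqrt_le_sqrt this
    _ = abs (∑ i, |y i|) := Real.sqrt_sq_eq_abs _
    _ = ∑ i, |y i| := abs_of_nonneg (Finset.sum_nonneg fun i _ => abs_nonneg _)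
  calc ‖y‖ ≤ ∑ i, |y i| := hnorm
  _ ≤ ∑ i, (∑ j, |A i j|) * ‖x‖ := Finset.sum_le_sum fun i _ => hyi i
  _ = (∑ i, ∑ j, |A i j|) * ‖x‖ := by rw [Finset.sum_mul]

/-- pointwise layered bound -/
lemma pw_layer (b : ℕ → ℝ) (r₁ : ℕ) (hb0 : 0 ≤ b r₁)
    (hbmono : ∀ r, r₁ ≤ r → b r ≤ b (r+1)) (v : ℝ) :
    ∀ K, r₁ ≤ K → min v (b K) ≤ b r₁ + ∑ r ∈ Finset.Ico r₁ K,
      b (r+1) * (if b r < v then 1 else 0) := by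
  intro K hK
  induction K with
  | zero =>
      have : r₁ = 0 := Nat.le_zero.mp hK
      subst this
      simpa using min_le_right v (b 0)
  | succ K ih =>
      have hbnn : ∀ r, r₁ ≤ r → 0 ≤ b r := by
        intro r hr
        induction r with
        | zero => simpa [Nat.le_zero.mp hr] using hb0
        | succ r ihr =>
            rcases Nat.lt_or_ge r₁ (r+1) with h | h
            · have hr' : r₁ ≤ r := Nat.lt_succ_iff.mp h
              exact le_trans (ihr hr') (hbmono r hr')
            · have : r₁ = r + 1 := le_antisymm hr h
              rw [← this]; exact hb0
      rcases Nat.lt_or_ge r₁ (K+1) with h | h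
      · have hK' : r₁ ≤ K := Nat.lt_succ_iff.mp h
        have hsum : ∑ r ∈ Finset.Ico r₁ (K+1), b (r+1) * (if b r < v then 1 else 0)
            = (∑ r ∈ Finset.Ico r₁ K, b (r+1) * (if b r < v then 1 else 0))
              + b (K+1) * (if b K < v then 1 else 0) := by
          rw [Finset.sum_Ico_succ_top hK']
        rw [hsum]
        by_cases hv : b K < v
        · have h1 : min v (b (K+1)) ≤ b (K+1) := min_le_right _ _
          have h2 : (0:ℝ) ≤ ∑ r ∈ Finset.Ico r₁ K, b (r+1) * (if b r < v then 1 else 0) := by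
            refine Finset.sum_nonneg fun r hr => ?_
            have hr' : r₁ ≤ r := (Finset.mem_Ico.mp hr).1
            have := hbnn (r+1) (le_trans hr' (Nat.le_succ r))
            positivity
          simp only [hv, if_pos, mul_one]
          nlinarith [hbnn (K+1) (le_trans hK' (Nat.le_succ K))]
        · push_neg at hv
          have h1 : min v (b (K+1)) = min v (b K) := by
            have : v ≤ b (K+1) := le_trans hv (hbmono K hK')
            rw [min_eq_left this, min_eq_left hv]
          rw [h1]
          have := ih hK'
          simp only [hv.not_gt, if_neg, mul_zero, not_lt]
          simpa [hv.not_gt] using this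
      · have : r₁ = K + 1 := le_antisymm hK h
        subst this
        simpa using min_le_right v (b (K+1))

lemma trunc_exp_bound {Ω : Type*} [MeasurableSpace Ω] (μ : Measure Ω) [IsProbabilityMeasure μ]
    (Y : Ω → ℝ) (hY : Measurable Y) (hY0 : ∀ ω, 0 ≤ Y ω)
    (b : ℕ → ℝ) (r₁ K : ℕ) (hr : r₁ ≤ K) (hb0 : 0 ≤ b r₁)
    (hbmono : ∀ r, r₁ ≤ r → b r ≤ b (r+1))
    (M : ℝ) (hM0 : 0 ≤ M) (hM : M ≤ b K) :
    ∫ ω, min (Y ω) M ∂μ ≤ b r₁ + ∑ r ∈ Finset.Ico r₁ K,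
      b (r+1) * (μ {ω | b r < Y ω}).toReal := by
  have hmeasset : ∀ r : ℕ, MeasurableSet {ω | b r < Y ω} := fun r =>
    measurableSet_lt measurable_const hY
  have hint1 : Integrable (fun ω => min (Y ω) M) μ := by
    refine Integrable.mono' (integrable_const M) ((hY.min measurable_const).aestronglyMeasurable)
      (Filter.Eventually.of_forall fun ω => ?_)
    rw [Real.norm_eq_abs, abs_of_nonneg (le_min (hY0 ω) hM0)]
    exact min_le_right _ _
  have hint2 : Integrable (fun ω => b r₁ + ∑ r ∈ Finset.Ico r₁ K,
      b (r+1) * (if b r < Y ω then (1:ℝ) else 0)) μ := by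
    refine (integrable_const (b r₁)).add (integrable_finset_sum _ fun r _ => ?_)
    have : (fun ω => b (r+1) * (if b r < Y ω then (1:ℝ) else 0))
        = fun ω => Set.indicator {ω | b r < Y ω} (fun _ => b (r+1)) ω := by
      ext ω; by_cases h : b r < Y ω <;> simp [Set.indicator_apply, h]
    rw [this]
    exact (integrable_const (b (r+1))).indicator (hmeasset r)
  have hle : ∀ ω, min (Y ω) M ≤ b r₁ + ∑ r ∈ Finset.Ico r₁ K,
      b (r+1) * (if b r < Y ω then (1:ℝ) else 0) := by
    intro ω
    exact le_trans (min_le_min le_rfl hM) (pw_layer b r₁ hb0 hbmono (Y ω) K hr)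
  calc ∫ ω, min (Y ω) M ∂μ ≤ ∫ ω, (b r₁ + ∑ r ∈ Finset.Ico r₁ K,
      b (r+1) * (if b r < Y ω then (1:ℝ) else 0)) ∂μ :=
        integral_mono hint1 hint2 hle
  _ = b r₁ + ∑ r ∈ Finset.Ico r₁ K, b (r+1) * (μ {ω | b r < Y ω}).toReal := by
      have heq : ∀ r : ℕ, (fun ω => b (r+1) * (if b r < Y ω then (1:ℝ) else 0))
          = fun ω => Set.indicator {ω | b r < Y ω} (fun _ => b (r+1)) ω := by
        intro r; ext ω; by_cases h : b r < Y ω <;> simp [Set.indicator_apply, h]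
      have hintr : ∀ r : ℕ, Integrable
          (fun ω => b (r+1) * (if b r < Y ω then (1:ℝ) else 0)) μ := by
        intro r; rw [heq r]
        exact (integrable_const (b (r+1))).indicator (hmeasset r)
      rw [integral_add (integrable_const _) (integrable_finset_sum _ fun r _ => hintr r),
        integral_const, integral_finset_sum _ fun r _ => hintr r]
      simp only [measure_univ, probReal_univ, ENNReal.toReal_one, smul_eq_mul, one_mul]
      congr 1
      refine Finset.sum_congr rfl fun r _ => ?_
      rw [heq r, integral_indicator_const _ (hmeasset r)]
      simp [mul_comm, measureReal_def]

set_option maxHeartbeats 2000000 in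
lemma analytic_core (α : ℝ) (hα : α ∈ Set.Ioo (0:ℝ) 1)
    (a : ℕ → ℝ) (F : ℝ → ℝ) (hF0 : ∀ u, 0 ≤ F u) (hFanti : Antitone F)
    (hFb : ∀ x : ℝ, 0 < x →
      Tendsto (fun n : ℕ => (n : ℝ) * F (a n * x)) atTop (nhds (x ^ (-α))))
    (hapos : ∀ m : ℕ, 1 ≤ m → 0 < a m)
    (δ : ℝ) (hδ : 0 < δ) :
    ∃ C : ℝ, 0 < C ∧ ∀ᶠ m : ℕ in atTop,
      (∃ r₁ K : ℕ, r₁ ≤ K ∧ 0 ≤ a (2^r₁) ∧ (∀ r, r₁ ≤ r → a (2^r) ≤ a (2^(r+1))) ∧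
        0 ≤ δ * a m ∧ δ * a m ≤ a (2^K) ∧
        a (2^r₁) + ∑ r ∈ Finset.Ico r₁ K, a (2^(r+1)) * F (a (2^r))
          ≤ C * (1 + a m / (m:ℝ)))
      ∧ (m:ℝ) ^ (1+α⁻¹) ≤ C * (a m)^2 ∧ 0 < a m := by
  obtain ⟨hα0, hα1⟩ := hα
  have hαne : α ≠ 0 := ne_of_gt hα0
  have hainv : 1 < α⁻¹ := one_lt_inv₀ hα0 |>.mpr hα1
  set θ : ℝ := (1+α⁻¹)/2 with hθdef
  have hθ1 : 1 < θ := by rw [hθdef]; linarith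
  set x₀ : ℝ := (2:ℝ) ^ (2*α⁻¹) with hx₀def
  set y₀ : ℝ := (2:ℝ) ^ θ with hy₀def
  have hx₀pos : 0 < x₀ := Real.rpow_pos_of_pos two_pos _
  have hy₀pos : 0 < y₀ := Real.rpow_pos_of_pos two_pos _
  have hy₀gt2 : 2 < y₀ := by
    have : (2:ℝ)^(1:ℝ) < 2^θ := Real.rpow_lt_rpow_left_iff one_lt_two |>.mpr hθ1
    simpa using this
  have hx₀val : x₀ ^ (-α) = 1/4 := by
    rw [hx₀def, ← Real.rpow_mul (by norm_num : (0:ℝ) ≤ 2)]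
    have : 2*α⁻¹ * -α = -2 := by field_simp
    rw [this, show (-2:ℝ) = ((-2:ℤ):ℝ) by norm_num, Real.rpow_intCast]
    norm_num
  have hx₁val : (x₀⁻¹) ^ (-α) = 4 := by
    rw [Real.inv_rpow (le_of_lt hx₀pos), hx₀val]; norm_num
  have hy₀val : 1/2 < y₀ ^ (-α) := by
    rw [hy₀def, ← Real.rpow_mul (by norm_num : (0:ℝ) ≤ 2)]
    have h1 : θ * -α = -((α+1)/2) := by rw [hθdef]; field_simp
    rw [h1]
    have h2 : (-1:ℝ) < -((α+1)/2) := by linarith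
    have := (Real.rpow_lt_rpow_left_iff (x := (2:ℝ)) one_lt_two).mpr h2
    calc (1:ℝ)/2 = (2:ℝ)^(-1:ℝ) := by
          rw [show (-1:ℝ) = ((-1:ℤ):ℝ) by norm_num, Real.rpow_intCast]; norm_num
    _ < 2 ^ (-((α+1)/2)) := this
  -- tendsto helpers
  have hT2m : Tendsto (fun m : ℕ => 2*m) atTop atTop := by
    rw [tendsto_atTop_atTop]; intro b; exact ⟨b, fun c hc => by omega⟩
  have hTpow : Tendsto (fun r : ℕ => 2^r) atTop atTop := by
    rw [tendsto_atTop_atTop]; intro b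
    exact ⟨b, fun c hc => le_trans hc (Nat.le_of_lt (Nat.lt_two_pow_self (n := c)))⟩
  have hTlogpow : Tendsto (fun m : ℕ => 2 ^ Nat.log 2 m) atTop atTop := by
    rw [tendsto_atTop_atTop]; intro b
    refine ⟨2^b, fun c hc => ?_⟩
    have hc0 : c ≠ 0 := by have := pow_pos (by norm_num : (0:ℕ) < 2) b; omega
    have : b ≤ Nat.log 2 c := (Nat.le_log_iff_pow_le one_lt_two hc0).mpr hc
    calc b ≤ 2^b := Nat.le_of_lt (Nat.lt_two_pow_self (n := b))
    _ ≤ 2 ^ Nat.log 2 c := Nat.pow_le_pow_right (by norm_num) this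
  have hTlogpow' : Tendsto (fun m : ℕ => 2 ^ (Nat.log 2 m + 1)) atTop atTop := by
    rw [tendsto_atTop_atTop]; intro b
    refine ⟨2^b, fun c hc => ?_⟩
    have hc0 : c ≠ 0 := by have := pow_pos (by norm_num : (0:ℕ) < 2) b; omega
    have : b ≤ Nat.log 2 c := (Nat.le_log_iff_pow_le one_lt_two hc0).mpr hc
    calc b ≤ 2^b := Nat.le_of_lt (Nat.lt_two_pow_self (n := b))
    _ ≤ 2 ^ (Nat.log 2 c + 1) := Nat.pow_le_pow_right (by norm_num) (by omega)
  -- basic limits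
  have limone : Tendsto (fun k : ℕ => (k:ℝ) * F (a k)) atTop (nhds 1) := by
    have h := hFb 1 one_pos
    simpa [Real.one_rpow] using h
  have lim2 : Tendsto (fun m : ℕ => (m:ℝ) * F (a (2*m))) atTop (nhds (1/2)) := by
    have h := (limone.comp hT2m).const_mul (1/2 : ℝ)
    have heq : (fun m : ℕ => (1/2 : ℝ) * (((2*m : ℕ):ℝ) * F (a (2*m))))
        = fun m : ℕ => (m:ℝ) * F (a (2*m)) := by
      funext m; push_cast; ring
    rw [Function.comp_def] at h
    rw [heq] at h
    simpa using h
  have limdyM : Tendsto (fun m : ℕ => ((2^(Nat.log 2 m) : ℕ):ℝ)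
      * F (a (2^(Nat.log 2 m)))) atTop (nhds 1) := by
    have h := limone.comp hTlogpow
    rw [Function.comp_def] at h
    exact h
  have limdyM' : Tendsto (fun m : ℕ => ((2^(Nat.log 2 m + 1) : ℕ):ℝ)
      * F (a (2^(Nat.log 2 m + 1)))) atTop (nhds 1) := by
    have h := limone.comp hTlogpow'
    rw [Function.comp_def] at h
    exact h
  -- antitone contrapositive helper
  have hflip : ∀ u v : ℝ, F u < F v → v < u := by
    intro u v h
    by_contra hc
    push_neg at hc
    exact absurd (hFanti hc) (not_le.mpr h)
  -- C1 : a (2*m) < x₀ * a m  eventually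
  have hC1 : ∀ᶠ m : ℕ in atTop, a (2*m) < a m * x₀ := by
    have h := (hFb x₀ hx₀pos).eventually_lt lim2 (by rw [hx₀val]; norm_num)
    filter_upwards [h, eventually_ge_atTop 1] with m hm hm1
    have hmpos : (0:ℝ) < m := by exact_mod_cast hm1
    exact hflip _ _ ((mul_lt_mul_iff_right₀ hmpos).mp hm)
  -- C2 : a m * y₀ < a (2*m) eventually
  have hC2 : ∀ᶠ m : ℕ in atTop, a m * y₀ < a (2*m) := by
    have h := lim2.eventually_lt (hFb y₀ hy₀pos) hy₀val
    filter_upwards [h, eventually_ge_atTop 1] with m hm hm1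
    have hmpos : (0:ℝ) < m := by exact_mod_cast hm1
    exact hflip _ _ ((mul_lt_mul_iff_right₀ hmpos).mp hm)
  -- C3 : a (2 ^ Nat.log 2 m) < a m * x₀ eventually
  have hC3 : ∀ᶠ m : ℕ in atTop, a (2 ^ Nat.log 2 m) < a m * x₀ := by
    have h1 : ∀ᶠ m : ℕ in atTop, (m:ℝ) * F (a m * x₀) < 1/2 :=
      (hFb x₀ hx₀pos).eventually_lt_const (by rw [hx₀val]; norm_num)
    have h2 : ∀ᶠ m : ℕ in atTop,
        (1:ℝ)/2 < ((2^(Nat.log 2 m) : ℕ):ℝ) * F (a (2^(Nat.log 2 m))) :=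
      limdyM.eventually_const_lt (by norm_num)
    filter_upwards [h1, h2, eventually_ge_atTop 1] with m hm1 hm2 hm3
    have hmpos : (0:ℝ) < m := by exact_mod_cast hm3
    have hle : ((2^(Nat.log 2 m) : ℕ):ℝ) ≤ (m:ℝ) := by
      exact_mod_cast Nat.pow_log_le_self 2 (by omega)
    have h4 : ((2^(Nat.log 2 m) : ℕ):ℝ) * F (a (2^(Nat.log 2 m)))
        ≤ (m:ℝ) * F (a (2^(Nat.log 2 m))) :=
      mul_le_mul_of_nonneg_right hle (hF0 _)
    have : (m:ℝ) * F (a m * x₀) < (m:ℝ) * F (a (2^(Nat.log 2 m))) := by linarith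
    exact hflip _ _ ((mul_lt_mul_iff_right₀ hmpos).mp this)
  -- C4 : a m * x₀⁻¹ < a (2 ^ (Nat.log 2 m + 1)) eventually
  have hC4 : ∀ᶠ m : ℕ in atTop, a m * x₀⁻¹ < a (2 ^ (Nat.log 2 m + 1)) := by
    have h1 : ∀ᶠ m : ℕ in atTop, (3:ℝ) < (m:ℝ) * F (a m * x₀⁻¹) :=
      (hFb x₀⁻¹ (inv_pos.mpr hx₀pos)).eventually_const_lt (by rw [hx₁val]; norm_num)
    have h2 : ∀ᶠ m : ℕ in atTop,
        ((2^(Nat.log 2 m + 1) : ℕ):ℝ) * F (a (2^(Nat.log 2 m + 1))) < 2 :=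
      limdyM'.eventually_lt_const (by norm_num)
    filter_upwards [h1, h2, eventually_ge_atTop 1] with m hm1 hm2 hm3
    have hmpos : (0:ℝ) < m := by exact_mod_cast hm3
    have hle : (m:ℝ) ≤ ((2^(Nat.log 2 m + 1) : ℕ):ℝ) := by
      exact_mod_cast Nat.le_of_lt (Nat.lt_pow_succ_log_self one_lt_two m)
    have h4 : (m:ℝ) * F (a (2^(Nat.log 2 m + 1)))
        ≤ ((2^(Nat.log 2 m + 1) : ℕ):ℝ) * F (a (2^(Nat.log 2 m + 1))) :=
      mul_le_mul_of_nonneg_right hle (hF0 _)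
    have : (m:ℝ) * F (a (2^(Nat.log 2 m + 1))) < (m:ℝ) * F (a m * x₀⁻¹) := by linarith
    exact hflip _ _ ((mul_lt_mul_iff_right₀ hmpos).mp this)
  -- C5 : dyadic tail bound
  have hC5 : ∀ᶠ r : ℕ in atTop, ((2^r : ℕ):ℝ) * F (a (2^r)) ≤ 2 := by
    exact (limone.comp hTpow).eventually_le_const (by norm_num)
  -- dyadic versions
  have hD1 : ∀ᶠ r : ℕ in atTop, a (2^(r+1)) < a (2^r) * x₀ := by
    filter_upwards [hTpow.eventually hC1] with r hr
    have h2 : 2 * 2^r = 2^(r+1) := by ring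
    rwa [h2] at hr
  have hD2 : ∀ᶠ r : ℕ in atTop, a (2^r) * y₀ < a (2^(r+1)) := by
    filter_upwards [hTpow.eventually hC2] with r hr
    have h2 : 2 * 2^r = 2^(r+1) := by ring
    rwa [h2] at hr
  obtain ⟨N₁, hN₁⟩ := eventually_atTop.mp hD1
  obtain ⟨N₂, hN₂⟩ := eventually_atTop.mp hD2
  obtain ⟨N₃, hN₃⟩ := eventually_atTop.mp hC5
  set r₁ : ℕ := max (max N₁ N₂) (max N₃ 1) with hr₁def
  have hbpos : ∀ r : ℕ, 0 < a (2^r) := by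
    intro r
    have := pow_pos (show (0:ℕ) < 2 by norm_num) r
    exact hapos _ (by omega)
  have hb_up : ∀ r, r₁ ≤ r → a (2^(r+1)) ≤ x₀ * a (2^r) := by
    intro r hr
    have := hN₁ r (le_trans (le_trans (le_max_left _ _) (le_max_left _ _)) hr)
    linarith [this, mul_comm (a (2^r)) x₀]
  have hb_lo : ∀ r, r₁ ≤ r → y₀ * a (2^r) ≤ a (2^(r+1)) := by
    intro r hr
    have := hN₂ r (le_trans (le_trans (le_max_right _ _) (le_max_left _ _)) hr)
    linarith [this, mul_comm (a (2^r)) y₀]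
  have hb_F : ∀ r, r₁ ≤ r → F (a (2^r)) ≤ 2 / ((2:ℝ)^r) := by
    intro r hr
    have h := hN₃ r (le_trans (le_trans (le_max_left _ _) (le_max_right _ _)) hr)
    have hcast : ((2^r : ℕ):ℝ) = (2:ℝ)^r := by push_cast; ring
    rw [hcast] at h
    rw [le_div_iff₀ (by positivity)]
    linarith [mul_comm (F (a (2^r))) ((2:ℝ)^r)]
  have hb_mono : ∀ r, r₁ ≤ r → a (2^r) ≤ a (2^(r+1)) := by
    intro r hr
    have h1 : a (2^r) ≤ y₀ * a (2^r) := by nlinarith [hbpos r]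
    exact le_trans h1 (hb_lo r hr)
  have hb_itlo : ∀ r s, r₁ ≤ r → y₀^s * a (2^r) ≤ a (2^(r+s)) := by
    intro r s hr
    induction s with
    | zero => simp
    | succ s ih =>
        have h1 : y₀^(s+1) * a (2^r) = y₀ * (y₀^s * a (2^r)) := by ring
        rw [h1]
        calc y₀ * (y₀^s * a (2^r)) ≤ y₀ * a (2^(r+s)) :=
              mul_le_mul_of_nonneg_left ih (le_of_lt hy₀pos)
        _ ≤ a (2^(r+s+1)) := hb_lo (r+s) (le_trans hr (Nat.le_add_right r s))
  have hb_itup : ∀ r s, r₁ ≤ r → a (2^(r+s)) ≤ x₀^s * a (2^r) := by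
    intro r s hr
    induction s with
    | zero => simp
    | succ s ih =>
        calc a (2^(r+s+1)) ≤ x₀ * a (2^(r+s)) :=
              hb_up (r+s) (le_trans hr (Nat.le_add_right r s))
        _ ≤ x₀ * (x₀^s * a (2^r)) := mul_le_mul_of_nonneg_left ih (le_of_lt hx₀pos)
        _ = x₀^(s+1) * a (2^r) := by ring
  obtain ⟨s₀, hs₀⟩ := pow_unbounded_of_one_lt (δ * x₀) (lt_trans one_lt_two hy₀gt2)
  set q : ℝ := 2 / y₀ with hqdef
  have hq0 : 0 ≤ q := by positivity
  have hq1 : q < 1 := (div_lt_one hy₀pos).mpr hy₀gt2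
  have h1q : (0:ℝ) < 1 - q := by linarith
  have hgeomK : ∀ K : ℕ, ∑ i ∈ Finset.range K, q ^ i ≤ (1-q)⁻¹ := by
    intro K
    have h := mul_neg_geom_sum q K
    rw [inv_eq_one_div, le_div_iff₀ h1q]
    have : (∑ i ∈ Finset.range K, q ^ i) * (1-q) = 1 - q^K := by rw [mul_comm]; exact h
    rw [this]
    nlinarith [pow_nonneg hq0 K]
  set D : ℝ := x₀ ^ (1+s₀) * x₀ with hDdef
  have hDpos : 0 < D := by positivity
  set Cs : ℝ := 8 * D * (1-q)⁻¹ with hCsdef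
  have hCspos : 0 < Cs := by positivity
  set clb : ℝ := a (2^r₁) / (y₀^r₁ * x₀ * y₀) with hclbdef
  have hclbpos : 0 < clb := by
    rw [hclbdef]
    exact div_pos (hbpos r₁) (by positivity)
  set C : ℝ := max (a (2^r₁)) Cs + (clb^2)⁻¹ + 1 with hCdef
  have hC1' : a (2^r₁) ≤ C := by
    have h1 : (0:ℝ) < (clb^2)⁻¹ := by positivity
    have h2 := le_max_left (a (2^r₁)) Cs
    rw [hCdef]; linarith
  have hC2' : Cs ≤ C := by
    have h1 : (0:ℝ) < (clb^2)⁻¹ := by positivity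
    have h2 := le_max_right (a (2^r₁)) Cs
    rw [hCdef]; linarith
  have hC3' : (clb^2)⁻¹ ≤ C := by
    have h2 : (0:ℝ) ≤ max (a (2^r₁)) Cs := le_trans (le_of_lt (hbpos r₁)) (le_max_left _ _)
    rw [hCdef]; linarith
  have hCpos : 0 < C := lt_of_lt_of_le (hbpos r₁) hC1'
  clear_value θ x₀ y₀ q D Cs clb C r₁
  refine ⟨C, hCpos, ?_⟩
  filter_upwards [hC3, hC4, eventually_ge_atTop (max (2^r₁) 1)] with m hm3 hm4 hmge
  have hm1 : 1 ≤ m := le_trans (le_max_right _ _) hmge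
  have hm2 : 2^r₁ ≤ m := le_trans (le_max_left _ _) hmge
  have hmp : (0:ℝ) < m := by exact_mod_cast hm1
  set R : ℕ := Nat.log 2 m with hRdef
  have hRr₁ : r₁ ≤ R := (Nat.le_log_iff_pow_le one_lt_two (by omega)).mpr hm2
  set K : ℕ := R + 1 + s₀ with hKdef
  have hampos : 0 < a m := hapos m hm1
  have hmlt : (m:ℝ) < 2 * (2:ℝ)^R := by
    have h := Nat.lt_pow_succ_log_self one_lt_two m
    have : (m:ℝ) < ((2^(R+1) : ℕ):ℝ) := by exact_mod_cast h
    calc (m:ℝ) < ((2^(R+1) : ℕ):ℝ) := this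
    _ = 2 * (2:ℝ)^R := by push_cast; ring
  have hamx : a m < a (2^(R+1)) * x₀ := by
    have h := hm4
    have : a m = (a m * x₀⁻¹) * x₀ := by field_simp
    rw [this]
    exact mul_lt_mul_of_pos_right h hx₀pos
  clear_value R K
  constructor
  · -- existence part
    refine ⟨r₁, K, by omega, le_of_lt (hbpos r₁), fun r hr => hb_mono r hr,
      mul_nonneg hδ.le hampos.le, ?_, ?_⟩
    · -- δ * a m ≤ a (2^K)
      have h1 : δ * a m < (δ * x₀) * a (2^(R+1)) := by
        calc δ * a m < δ * (a (2^(R+1)) * x₀) := by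
              exact mul_lt_mul_of_pos_left hamx hδ
        _ = (δ * x₀) * a (2^(R+1)) := by ring
      have h2 : (δ * x₀) * a (2^(R+1)) ≤ y₀^s₀ * a (2^(R+1)) :=
        mul_le_mul_of_nonneg_right (le_of_lt hs₀) (le_of_lt (hbpos (R+1)))
      have h3 : y₀^s₀ * a (2^(R+1)) ≤ a (2^(R+1+s₀)) := hb_itlo (R+1) s₀ (by omega)
      have hidx : R+1+s₀ = K := by omega
      rw [hidx] at h3
      linarith
    · -- sum bound
      have hterm : ∀ r ∈ Finset.Ico r₁ K, a (2^(r+1)) * F (a (2^r))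
          ≤ (4 * a (2^K) / ((2:ℝ)^K)) * q^(K-1-r) := by
        intro r hr
        obtain ⟨hr1, hr2⟩ := Finset.mem_Ico.mp hr
        set j : ℕ := K - 1 - r with hjdef
        have h1 : y₀^j * a (2^(r+1)) ≤ a (2^(r+1+j)) := hb_itlo (r+1) j (by omega)
        have hidx : r+1+j = K := by omega
        rw [hidx] at h1
        have h2 : a (2^(r+1)) ≤ a (2^K) / y₀^j := by
          rw [le_div_iff₀ (pow_pos hy₀pos j)]
          linarith [mul_comm (a (2^(r+1))) (y₀^j)]
        have h3 : F (a (2^r)) ≤ 2 / ((2:ℝ)^r) := hb_F r hr1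
        have h4 : a (2^(r+1)) * F (a (2^r)) ≤ (a (2^K) / y₀^j) * (2 / ((2:ℝ)^r)) :=
          mul_le_mul h2 h3 (hF0 _)
            (div_nonneg (le_of_lt (hbpos K)) (le_of_lt (pow_pos hy₀pos j)))
        have hpowK : (2:ℝ)^K = (2:ℝ)^r * (2:ℝ)^j * 2 := by
          rw [← pow_add, ← pow_succ]
          congr 1
          omega
        have h5 : (a (2^K) / y₀^j) * (2 / ((2:ℝ)^r))
            = (4 * a (2^K) / ((2:ℝ)^K)) * q^j := by
          rw [hpowK, hqdef, div_pow]
          have hy₀ne : y₀ ≠ 0 := ne_of_gt hy₀pos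
          have h2r : ((2:ℝ)^r) ≠ 0 := by positivity
          have h2j : ((2:ℝ)^j) ≠ 0 := by positivity
          have hyj : (y₀^j) ≠ 0 := by positivity
          field_simp
          ring
        rw [h5] at h4
        exact h4
      have hgeo : ∑ r ∈ Finset.Ico r₁ K, q^(K-1-r) ≤ (1-q)⁻¹ := by
        calc ∑ r ∈ Finset.Ico r₁ K, q^(K-1-r)
            ≤ ∑ r ∈ Finset.range K, q^(K-1-r) := by
              refine Finset.sum_le_sum_of_subset_of_nonneg ?_ (fun i _ _ => pow_nonneg hq0 _)
              rw [Finset.range_eq_Ico]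
              exact Finset.Ico_subset_Ico (Nat.zero_le _) le_rfl
        _ = ∑ i ∈ Finset.range K, q^i := Finset.sum_range_reflect (fun i => q^i) K
        _ ≤ (1-q)⁻¹ := hgeomK K
      have hsum : ∑ r ∈ Finset.Ico r₁ K, a (2^(r+1)) * F (a (2^r))
          ≤ (4 * a (2^K) / ((2:ℝ)^K)) * (1-q)⁻¹ := by
        calc ∑ r ∈ Finset.Ico r₁ K, a (2^(r+1)) * F (a (2^r))
            ≤ ∑ r ∈ Finset.Ico r₁ K, (4 * a (2^K) / ((2:ℝ)^K)) * q^(K-1-r) :=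
              Finset.sum_le_sum hterm
        _ = (4 * a (2^K) / ((2:ℝ)^K)) * ∑ r ∈ Finset.Ico r₁ K, q^(K-1-r) := by
              rw [Finset.mul_sum]
        _ ≤ (4 * a (2^K) / ((2:ℝ)^K)) * (1-q)⁻¹ :=
              mul_le_mul_of_nonneg_left hgeo
                (div_nonneg (by nlinarith [hbpos K]) (by positivity))
      have hbK : a (2^K) ≤ D * a m := by
        have h1 : a (2^(R+(1+s₀))) ≤ x₀^(1+s₀) * a (2^R) := hb_itup R (1+s₀) hRr₁
        have hidx : R+(1+s₀) = K := by omega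
        rw [hidx] at h1
        have h2 : x₀^(1+s₀) * a (2^R) ≤ x₀^(1+s₀) * (a m * x₀) :=
          mul_le_mul_of_nonneg_left (le_of_lt hm3) (pow_pos hx₀pos (1+s₀)).le
        calc a (2^K) ≤ x₀^(1+s₀) * (a m * x₀) := le_trans h1 h2
        _ = D * a m := by rw [hDdef]; ring
      have hm2K : (m:ℝ) ≤ 2 * (2:ℝ)^K := by
        have h1 : (2:ℝ)^R ≤ (2:ℝ)^K :=
          pow_le_pow_right₀ (by norm_num) (by omega)
        linarith
      have hfrac : (4 * a (2^K) / ((2:ℝ)^K)) * (1-q)⁻¹ ≤ Cs * (a m / m) := by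
        have h2K : (0:ℝ) < (2:ℝ)^K := by positivity
        have key : a (2^K) * (m:ℝ) ≤ D * a m * (2 * (2:ℝ)^K) :=
          mul_le_mul hbK hm2K (le_of_lt hmp) (mul_nonneg hDpos.le hampos.le)
        rw [hCsdef]
        rw [div_mul_eq_mul_div, div_le_iff₀ h2K]
        have hiq : (0:ℝ) < (1-q)⁻¹ := by positivity
        have expand : 8 * D * (1-q)⁻¹ * (a m / m) * (2:ℝ)^K
            = 4 * (1-q)⁻¹ * (D * a m * (2 * (2:ℝ)^K)) / m := by
          field_simp
          ring
        rw [expand, le_div_iff₀ hmp]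
        calc 4 * a (2^K) * (1-q)⁻¹ * (m:ℝ)
            = 4 * (1-q)⁻¹ * (a (2^K) * (m:ℝ)) := by ring
        _ ≤ 4 * (1-q)⁻¹ * (D * a m * (2 * (2:ℝ)^K)) := by
              exact mul_le_mul_of_nonneg_left key
                (mul_nonneg (by norm_num) hiq.le)
      have hamdiv : 0 ≤ a m / m := div_nonneg hampos.le hmp.le
      calc a (2^r₁) + ∑ r ∈ Finset.Ico r₁ K, a (2^(r+1)) * F (a (2^r))
          ≤ C + Cs * (a m / m) := add_le_add hC1' (le_trans hsum hfrac)
      _ ≤ C + C * (a m / m) := by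
            exact add_le_add_right (mul_le_mul_of_nonneg_right hC2' hamdiv) C
      _ = C * (1 + a m / m) := by ring
  constructor
  · -- lower bound on a m
    have h1 : y₀^(R - r₁) * a (2^r₁) ≤ a (2^R) := by
      have h := hb_itlo r₁ (R - r₁) le_rfl
      have hidx : r₁ + (R - r₁) = R := by omega
      rwa [hidx] at h
    have hpowsub : y₀^(R - r₁) = y₀^R / y₀^r₁ := by
      rw [pow_sub₀ _ (ne_of_gt hy₀pos) hRr₁]
      rw [div_eq_mul_inv]
    have hyRb : ((m:ℝ)/2) ^ θ ≤ y₀^R := by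
      have hy : y₀^R = ((2:ℝ)^R) ^ θ := by
        rw [hy₀def, ← Real.rpow_natCast ((2:ℝ)^(θ:ℝ)) R, ← Real.rpow_mul (by norm_num : (0:ℝ) ≤ 2),
          mul_comm, Real.rpow_mul (by norm_num : (0:ℝ) ≤ 2), Real.rpow_natCast]
      rw [hy]
      apply Real.rpow_le_rpow (by positivity) (by linarith) (by linarith)
    have hdiv : ((m:ℝ)/2) ^ θ = (m:ℝ)^θ / y₀ := by
      rw [Real.div_rpow (le_of_lt hmp) (by norm_num : (0:ℝ) ≤ 2), hy₀def]
    have hlb : clb * (m:ℝ)^θ ≤ a m := by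
      have h2 : a (2^R) / x₀ ≤ a m := by
        rw [div_le_iff₀ hx₀pos]
        linarith
      have h3 : clb * (m:ℝ)^θ ≤ a (2^R) / x₀ := by
        rw [hclbdef, le_div_iff₀ hx₀pos]
        have h4 : (m:ℝ)^θ / y₀ ≤ y₀^R := by rw [← hdiv]; exact hyRb
        have h5 : (m:ℝ)^θ ≤ y₀^R * y₀ := by
          rw [div_le_iff₀ hy₀pos] at h4; linarith
        have h6 : y₀^R / y₀^r₁ * a (2^r₁) ≤ a (2^R) := by
          rw [← hpowsub]; exact h1
        -- goal : a (2^r₁) / (y₀^r₁ * x₀ * y₀) * (m:ℝ)^θ * x₀ ≤ a (2^R)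
        have hy₀r : (0:ℝ) < y₀^r₁ := pow_pos hy₀pos r₁
        calc a (2^r₁) / (y₀^r₁ * x₀ * y₀) * (m:ℝ)^θ * x₀
            = (a (2^r₁) / y₀^r₁) * ((m:ℝ)^θ / y₀) := by field_simp
        _ ≤ (a (2^r₁) / y₀^r₁) * y₀^R := by
              exact mul_le_mul_of_nonneg_left h4 (div_nonneg (hbpos r₁).le hy₀r.le)
        _ = y₀^R / y₀^r₁ * a (2^r₁) := by ring
        _ ≤ a (2^R) := h6
      linarith
    have hsq : (clb * (m:ℝ)^θ)^2 ≤ (a m)^2 := by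
      apply pow_le_pow_left₀ (mul_nonneg hclbpos.le (Real.rpow_nonneg hmp.le θ)) hlb
    have hmθ : ((m:ℝ)^θ)^2 = (m:ℝ)^(1+α⁻¹) := by
      rw [sq, ← Real.rpow_add hmp]
      congr 1
      rw [hθdef]; ring
    have hexp : (clb * (m:ℝ)^θ)^2 = clb^2 * (m:ℝ)^(1+α⁻¹) := by
      rw [mul_pow, hmθ]
    rw [hexp] at hsq
    have hclb2 : (0:ℝ) < clb^2 := by positivity
    calc (m:ℝ)^(1+α⁻¹) = (clb^2)⁻¹ * (clb^2 * (m:ℝ)^(1+α⁻¹)) := by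
          rw [← mul_assoc, inv_mul_cancel₀ (ne_of_gt hclb2), one_mul]
    _ ≤ (clb^2)⁻¹ * (a m)^2 :=
          mul_le_mul_of_nonneg_left hsq (inv_nonneg.mpr hclb2.le)
    _ ≤ C * (a m)^2 := mul_le_mul_of_nonneg_right hC3' (by positivity)
  · exact hampos

set_option maxHeartbeats 1000000 in
/-- Let `X` be a `p×n` random matrix with identically distributed
entries having regularly varying tails of index `α ∈ (0,1)` and normalizing sequence
`a_m = m^{1/α} L(m)`, with independent rows (arbitrary dependence within each row).
If `p_n → ∞` and `p_n ≤ C n^β` eventually for some `β < ∞`, then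
`a_{np}^{-2} ‖X Xᵀ − diag(X Xᵀ)‖₂ → 0` in probability. -/
theorem stmt13 {Ω : Type*} [MeasurableSpace Ω] (μ : Measure Ω) [IsProbabilityMeasure μ]
    (X : ℕ → Ω → ℕ → ℝ) (hmeas : ∀ i, Measurable (X i))
    (hrows_indep : iIndepFun X μ)
    (hident : ∀ i t, IdentDistrib (fun ω => X i ω t) (fun ω => X 0 ω 0) μ μ)
    (α : ℝ) (hα : α ∈ Set.Ioo (0:ℝ) 1)
    (L : ℝ → ℝ) (hLpos : ∀ x : ℝ, 0 < x → 0 < L x)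
    (hLslow : ∀ x : ℝ, 0 < x → Tendsto (fun t => L (t * x) / L t) atTop (nhds 1))
    (a : ℕ → ℝ) (ha : ∀ m : ℕ, a m = (m : ℝ) ^ (α⁻¹) * L m)
    (hb : ∀ x : ℝ, 0 < x →
      Tendsto (fun n : ℕ => (n : ℝ) * (μ {ω | a n * x < |X 0 ω 0|}).toReal)
        atTop (nhds (x ^ (-α))))
    (p : ℕ → ℕ) (hp : Tendsto p atTop atTop)
    (β C : ℝ) (hβ : 0 < β)
    (hgrowth : ∀ᶠ n : ℕ in atTop, (p n : ℝ) ≤ C * (n : ℝ) ^ β) :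
    ∀ ε : ℝ, 0 < ε →
      Tendsto (fun n : ℕ =>
          μ {ω | (a (n * p n)) ^ 2 * ε <
              l2OpNorm (Matrix.of (fun i j : Fin (p n) =>
                if i = j then 0
                else ∑ t ∈ Finset.range n, X i ω t * X j ω t))})
        atTop (nhds 0) := by
  intro ε hε
  obtain ⟨hα0, hα1⟩ := hα
  have hαne : α ≠ 0 := ne_of_gt hα0
  have hainv : 1 < α⁻¹ := (one_lt_inv₀ hα0).mpr hα1
  have hXmeas : ∀ i t, Measurable (fun ω => X i ω t) := fun i t =>
    (measurable_pi_apply t).comp (hmeas i)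
  have hF0 : ∀ u : ℝ, 0 ≤ (μ {ω | u < |X 0 ω 0|}).toReal := fun u => ENNReal.toReal_nonneg
  have hFanti : Antitone (fun u : ℝ => (μ {ω | u < |X 0 ω 0|}).toReal) := by
    intro u v huv
    exact ENNReal.toReal_mono (measure_ne_top μ _)
      (measure_mono fun ω hω => lt_of_le_of_lt huv hω)
  have hapos : ∀ m : ℕ, 1 ≤ m → 0 < a m := by
    intro m hm
    have hm' : (0:ℝ) < m := by exact_mod_cast hm
    rw [ha m]
    exact mul_pos (Real.rpow_pos_of_pos hm' _) (hLpos _ hm')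
  have hTm : Tendsto (fun n : ℕ => n * p n) atTop atTop := by
    rw [tendsto_atTop_atTop]
    intro b
    obtain ⟨N₁, hN₁⟩ := eventually_atTop.mp (hp.eventually_ge_atTop 1)
    refine ⟨max b N₁, fun n hn => ?_⟩
    have h1 : 1 ≤ p n := hN₁ n (le_trans (le_max_right _ _) hn)
    calc b ≤ n := le_trans (le_max_left _ _) hn
    _ = n * 1 := (mul_one n).symm
    _ ≤ n * p n := Nat.mul_le_mul_left n h1
  -- master bound
  have master : ∀ δ : ℝ, 0 < δ → ∀ᶠ n : ℕ in atTop,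
      (μ {ω | (a (n * p n)) ^ 2 * ε <
          l2OpNorm (Matrix.of (fun i j : Fin (p n) =>
            if i = j then 0
            else ∑ t ∈ Finset.range n, X i ω t * X j ω t))}).toReal
        ≤ ((n * p n : ℕ) : ℝ) * (μ {ω | a (n * p n) * δ < |X 0 ω 0|}).toReal
          + (p n : ℝ)^2 * n * (∫ ω, min |X 0 ω 0| (a (n * p n) * δ) ∂μ)^2
            / ((a (n * p n))^2 * ε) := by
    intro δ hδ
    filter_upwards [hp.eventually_ge_atTop 1, eventually_ge_atTop 1,
      hTm.eventually_ge_atTop 1] with n hpn hn1 hm1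
    have hampos : 0 < a (n * p n) := hapos _ hm1
    set M : ℝ := a (n * p n) * δ with hMdef
    have hMpos : 0 < M := mul_pos hampos hδ
    set s : ℕ → ℕ → Ω → ℝ := fun i t ω => min |X i ω t| M with hsdef
    have hs_meas : ∀ i t, Measurable (s i t) := fun i t =>
      (hXmeas i t).abs.min measurable_const
    have hs_nonneg : ∀ i t ω, 0 ≤ s i t ω := fun i t ω =>
      le_min (abs_nonneg _) hMpos.le
    have hs_le : ∀ i t ω, s i t ω ≤ M := fun i t ω => min_le_right _ _
    have hs_int : ∀ i t, Integrable (s i t) μ := by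
      intro i t
      refine Integrable.mono' (integrable_const M) (hs_meas i t).aestronglyMeasurable
        (Eventually.of_forall fun ω => ?_)
      rw [Real.norm_eq_abs, abs_of_nonneg (hs_nonneg i t ω)]
      exact hs_le i t ω
    have hprod_int : ∀ i j t, Integrable (fun ω => s i t ω * s j t ω) μ := by
      intro i j t
      refine Integrable.mono' (integrable_const (M*M))
        ((hs_meas i t).mul (hs_meas j t)).aestronglyMeasurable
        (Eventually.of_forall fun ω => ?_)
      rw [Real.norm_eq_abs, abs_of_nonneg (mul_nonneg (hs_nonneg i t ω) (hs_nonneg j t ω))]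
      exact mul_le_mul (hs_le i t ω) (hs_le j t ω) (hs_nonneg j t ω) hMpos.le
    set T : Ω → ℝ := fun ω => ∑ i : Fin (p n), ∑ j : Fin (p n),
      (if i = j then 0 else ∑ t ∈ Finset.range n, s i t ω * s j t ω) with hTdef
    have hT_nonneg : ∀ ω, 0 ≤ T ω := by
      intro ω
      refine Finset.sum_nonneg fun i _ => Finset.sum_nonneg fun j _ => ?_
      by_cases h : i = j
      · simp [h]
      · simp only [if_neg h]
        exact Finset.sum_nonneg fun t _ => mul_nonneg (hs_nonneg _ _ _) (hs_nonneg _ _ _)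
    have hif_int : ∀ i j : Fin (p n), Integrable (fun ω =>
        if i = j then (0:ℝ) else ∑ t ∈ Finset.range n, s i t ω * s j t ω) μ := by
      intro i j
      by_cases h : i = j
      · simp only [if_pos h]
        exact integrable_const 0
      · simp only [if_neg h]
        exact integrable_finset_sum _ fun t _ => hprod_int i j t
    have hT_int : Integrable T μ := by
      rw [hTdef]
      exact integrable_finset_sum _ fun i _ =>
        integrable_finset_sum _ fun j _ => hif_int i j
    set E1 : Set Ω := ⋃ i ∈ Finset.range (p n), ⋃ t ∈ Finset.range n,
      {ω | M < |X i ω t|} with hE1def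
    set e : ℝ := ∫ ω, min |X 0 ω 0| M ∂μ with hedef
    have he0 : 0 ≤ e := integral_nonneg fun ω => le_min (abs_nonneg _) hMpos.le
    -- inclusion
    have hincl : {ω | (a (n * p n)) ^ 2 * ε <
        l2OpNorm (Matrix.of (fun i j : Fin (p n) =>
          if i = j then 0
          else ∑ t ∈ Finset.range n, X i ω t * X j ω t))}
        ⊆ E1 ∪ {ω | (a (n * p n)) ^ 2 * ε < T ω} := by
      intro ω hω
      rw [Set.mem_union]
      by_cases hE : ω ∈ E1
      · exact Or.inl hE
      · right
        have hbd : ∀ i t : ℕ, i < p n → t < n → |X i ω t| ≤ M := by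
          intro i t hi ht
          by_contra hcon
          push_neg at hcon
          apply hE
          rw [hE1def]
          simp only [Set.mem_iUnion, Finset.mem_range, Set.mem_setOf_eq]
          exact ⟨i, hi, t, ht, hcon⟩
        have hnorm : l2OpNorm (Matrix.of (fun i j : Fin (p n) =>
            if i = j then 0
            else ∑ t ∈ Finset.range n, X i ω t * X j ω t)) ≤ T ω := by
          refine le_trans (l2OpNorm_le_sum_abs _) ?_
          refine Finset.sum_le_sum fun i _ => Finset.sum_le_sum fun j _ => ?_
          rw [Matrix.of_apply]
          by_cases h : i = j
          · simp [h]
          · simp only [if_neg h]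
            calc |∑ t ∈ Finset.range n, X i ω t * X j ω t|
                ≤ ∑ t ∈ Finset.range n, |X i ω t * X j ω t| :=
                  Finset.abs_sum_le_sum_abs _ _
            _ = ∑ t ∈ Finset.range n, s i t ω * s j t ω := by
                  refine Finset.sum_congr rfl fun t ht => ?_
                  have hti := hbd i t i.isLt (Finset.mem_range.mp ht)
                  have htj := hbd j t j.isLt (Finset.mem_range.mp ht)
                  rw [abs_mul, hsdef]
                  simp only []
                  rw [min_eq_left hti, min_eq_left htj]
        exact lt_of_lt_of_le hω hnorm
    -- E1 bound
    have hmeasone : ∀ i t : ℕ, μ {ω | M < |X i ω t|} = μ {ω | M < |X 0 ω 0|} := by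
      intro i t
      exact (hident i t).measure_mem_eq
        (measurableSet_lt measurable_const measurable_abs)
    have hE1b : (μ E1).toReal ≤ ((n * p n : ℕ):ℝ) * (μ {ω | M < |X 0 ω 0|}).toReal := by
      have h1 : μ E1 ≤ ∑ i ∈ Finset.range (p n), ∑ t ∈ Finset.range n,
          μ {ω | M < |X i ω t|} := by
        rw [hE1def]
        refine le_trans (measure_biUnion_finset_le _ _) ?_
        exact Finset.sum_le_sum fun i _ => measure_biUnion_finset_le _ _
      have h2 : ∑ i ∈ Finset.range (p n), ∑ t ∈ Finset.range n,
          μ {ω | M < |X i ω t|} = ((n * p n : ℕ) : ℝ≥0∞) * μ {ω | M < |X 0 ω 0|} := by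
        calc ∑ i ∈ Finset.range (p n), ∑ t ∈ Finset.range n, μ {ω | M < |X i ω t|}
            = ∑ _i ∈ Finset.range (p n), ∑ _t ∈ Finset.range n,
              μ {ω | M < |X 0 ω 0|} :=
              Finset.sum_congr rfl fun i _ =>
                Finset.sum_congr rfl fun t _ => hmeasone i t
        _ = ((n * p n : ℕ) : ℝ≥0∞) * μ {ω | M < |X 0 ω 0|} := by
              rw [Finset.sum_const, Finset.sum_const, Finset.card_range,
                Finset.card_range, smul_smul, nsmul_eq_mul]
              congr 2
              · push_cast
                ring
        _ = ((n * p n : ℕ) : ℝ≥0∞) * μ {ω | M < |X 0 ω 0|} := rfl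
      have h3 : μ E1 ≤ ((n * p n : ℕ) : ℝ≥0∞) * μ {ω | M < |X 0 ω 0|} := h2 ▸ h1
      calc (μ E1).toReal
          ≤ (((n * p n : ℕ) : ℝ≥0∞) * μ {ω | M < |X 0 ω 0|}).toReal :=
            ENNReal.toReal_mono
              (ENNReal.mul_ne_top (ENNReal.natCast_ne_top _) (measure_ne_top μ _)) h3
      _ = ((n * p n : ℕ):ℝ) * (μ {ω | M < |X 0 ω 0|}).toReal := by
            rw [ENNReal.toReal_mul, ENNReal.toReal_natCast]
    -- product expectation
    have hint_eq : ∀ i j : Fin (p n), i ≠ j → ∀ t : ℕ,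
        ∫ ω, s i t ω * s j t ω ∂μ = e * e := by
      intro i j hij t
      have hij' : (i:ℕ) ≠ (j:ℕ) := fun h => hij (Fin.val_injective h)
      have hIJ : IndepFun (X i) (X j) μ := hrows_indep.indepFun hij'
      have hφ : Measurable (fun g : ℕ → ℝ => min |g t| M) :=
        ((measurable_pi_apply t).abs).min measurable_const
      have hIndep : IndepFun (s i t) (s j t) μ := hIJ.comp hφ hφ
      have hmul := hIndep.integral_mul_eq_mul_integral (hs_int i t).aestronglyMeasurable (hs_int j t).aestronglyMeasurable
      have hid : ∀ k : ℕ, ∫ ω, s k t ω ∂μ = e := by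
        intro k
        have hφ' : Measurable (fun x : ℝ => min |x| M) :=
          measurable_abs.min measurable_const
        exact ((hident k t).comp hφ').integral_eq
      calc ∫ ω, s i t ω * s j t ω ∂μ
          = (∫ ω, s i t ω ∂μ) * (∫ ω, s j t ω ∂μ) := hmul
      _ = e * e := by rw [hid i, hid j]
    have hT_integral : ∫ ω, T ω ∂μ ≤ (p n:ℝ)^2 * n * e^2 := by
      have hTsum : ∫ ω, T ω ∂μ = ∑ i : Fin (p n), ∑ j : Fin (p n),
          ∫ ω, (if i = j then (0:ℝ)
            else ∑ t ∈ Finset.range n, s i t ω * s j t ω) ∂μ := by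
        rw [hTdef]
        rw [integral_finset_sum _ (fun i _ =>
          integrable_finset_sum _ fun j _ => hif_int i j)]
        exact Finset.sum_congr rfl fun i _ =>
          integral_finset_sum _ fun j _ => hif_int i j
      rw [hTsum]
      calc ∑ i : Fin (p n), ∑ j : Fin (p n),
          ∫ ω, (if i = j then (0:ℝ)
            else ∑ t ∈ Finset.range n, s i t ω * s j t ω) ∂μ
          ≤ ∑ _i : Fin (p n), ∑ _j : Fin (p n), (n:ℝ) * e^2 := by
            refine Finset.sum_le_sum fun i _ => Finset.sum_le_sum fun j _ => ?_
            by_cases h : i = j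
            · simp only [if_pos h, integral_zero]
              positivity
            · simp only [if_neg h]
              rw [integral_finset_sum _ fun t _ => hprod_int i j t]
              refine le_of_eq ?_
              calc ∑ t ∈ Finset.range n, ∫ ω, s i t ω * s j t ω ∂μ
                  = ∑ _t ∈ Finset.range n, e * e :=
                    Finset.sum_congr rfl fun t _ => hint_eq i j h t
              _ = (n:ℝ) * e^2 := by
                    rw [Finset.sum_const, Finset.card_range, nsmul_eq_mul, sq]
      _ = (p n:ℝ)^2 * n * e^2 := by
            rw [Finset.sum_const, Finset.sum_const, Finset.card_univ, Fintype.card_fin,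
              smul_smul, nsmul_eq_mul]
            push_cast
            ring
    -- Markov
    have hc2 : (0:ℝ) < (a (n * p n))^2 * ε := mul_pos (pow_pos hampos 2) hε
    have hmarkov : (μ {ω | (a (n * p n))^2 * ε < T ω}).toReal
        ≤ (∫ ω, T ω ∂μ) / ((a (n * p n))^2 * ε) := by
      have h1 := mul_meas_ge_le_integral_of_nonneg
        (Eventually.of_forall hT_nonneg) hT_int ((a (n * p n))^2 * ε)
      have h2 : (μ {ω | (a (n * p n))^2 * ε < T ω}).toReal
          ≤ (μ {ω | (a (n * p n))^2 * ε ≤ T ω}).toReal :=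
        ENNReal.toReal_mono (measure_ne_top μ _)
          (measure_mono (Set.setOf_subset_setOf.mpr fun ω hω => le_of_lt hω))
      rw [le_div_iff₀ hc2]
      calc (μ {ω | (a (n * p n))^2 * ε < T ω}).toReal * ((a (n * p n))^2 * ε)
          ≤ (μ {ω | (a (n * p n))^2 * ε ≤ T ω}).toReal * ((a (n * p n))^2 * ε) :=
            mul_le_mul_of_nonneg_right h2 hc2.le
      _ = ((a (n * p n))^2 * ε) * (μ {ω | (a (n * p n))^2 * ε ≤ T ω}).toReal :=
            mul_comm _ _
      _ ≤ ∫ ω, T ω ∂μ := h1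
    have hS2b : (μ {ω | (a (n * p n))^2 * ε < T ω}).toReal
        ≤ (p n:ℝ)^2 * n * e^2 / ((a (n * p n))^2 * ε) :=
      le_trans hmarkov ((div_le_div_iff_of_pos_right hc2).mpr hT_integral)
    -- combine
    calc (μ {ω | (a (n * p n)) ^ 2 * ε <
        l2OpNorm (Matrix.of (fun i j : Fin (p n) =>
          if i = j then 0
          else ∑ t ∈ Finset.range n, X i ω t * X j ω t))}).toReal
        ≤ (μ (E1 ∪ {ω | (a (n * p n))^2 * ε < T ω})).toReal :=
          ENNReal.toReal_mono (measure_ne_top μ _) (measure_mono hincl)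
    _ ≤ (μ E1 + μ {ω | (a (n * p n))^2 * ε < T ω}).toReal :=
          ENNReal.toReal_mono
            (ENNReal.add_ne_top.mpr ⟨measure_ne_top μ _, measure_ne_top μ _⟩)
            (measure_union_le _ _)
    _ ≤ (μ E1).toReal + (μ {ω | (a (n * p n))^2 * ε < T ω}).toReal :=
          ENNReal.toReal_add_le
    _ ≤ ((n * p n : ℕ):ℝ) * (μ {ω | M < |X 0 ω 0|}).toReal
          + (p n:ℝ)^2 * n * e^2 / ((a (n * p n))^2 * ε) := add_le_add hE1b hS2b
  -- final assembly
  rw [ENNReal.tendsto_nhds_zero]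
  intro ε' hε'
  rcases eq_or_ne ε' ⊤ with rfl | htop
  · exact Eventually.of_forall fun n => le_top
  have hε't : 0 < ε'.toReal := ENNReal.toReal_pos (ne_of_gt hε') htop
  have hcpos : 0 < min (ε'.toReal / 2) (1/2) := lt_min (by linarith) (by norm_num)
  obtain ⟨c, hcdef⟩ : ∃ c : ℝ, c = min (ε'.toReal / 2) (1/2) := ⟨_, rfl⟩
  rw [← hcdef] at hcpos
  obtain ⟨δ, hδdef⟩ : ∃ δ : ℝ, δ = c ^ (-α⁻¹) := ⟨_, rfl⟩
  have hδpos : 0 < δ := hδdef ▸ Real.rpow_pos_of_pos hcpos _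
  have hδval : δ ^ (-α) = c := by
    rw [hδdef, ← Real.rpow_mul hcpos.le]
    have h1 : -α⁻¹ * -α = 1 := by field_simp
    rw [h1, Real.rpow_one]
  -- term1 limit
  have hterm1 : Tendsto (fun n : ℕ => ((n * p n : ℕ):ℝ)
      * (μ {ω | a (n * p n) * δ < |X 0 ω 0|}).toReal) atTop (nhds c) := by
    have h := (hb δ hδpos).comp hTm
    rw [Function.comp_def] at h
    rwa [hδval] at h
  -- term2 limit
  have hterm2 : Tendsto (fun n : ℕ => (p n : ℝ)^2 * n
      * (∫ ω, min |X 0 ω 0| (a (n * p n) * δ) ∂μ)^2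
      / ((a (n * p n))^2 * ε)) atTop (nhds 0) := by
    obtain ⟨Cc, hCcpos, hcore⟩ := analytic_core α ⟨hα0, hα1⟩ a
      (fun u => (μ {ω | u < |X 0 ω 0|}).toReal) hF0 hFanti hb hapos δ hδpos
    have hem : ∀ᶠ mm : ℕ in atTop,
        0 ≤ (∫ ω, min |X 0 ω 0| (a mm * δ) ∂μ) ∧
        (∫ ω, min |X 0 ω 0| (a mm * δ) ∂μ) ≤ Cc * (1 + a mm / mm) ∧
        (mm:ℝ)^(1+α⁻¹) ≤ Cc * (a mm)^2 ∧ 0 < a mm := by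
      filter_upwards [hcore] with mm hmm
      obtain ⟨⟨r₁, K, hK1, hK2, hK3, hK4, hK5, hK6⟩, hlow, hposa⟩ := hmm
      have hM0 : 0 ≤ a mm * δ := by rw [mul_comm]; exact hK4
      have hMK : a mm * δ ≤ a (2^K) := by rw [mul_comm]; exact hK5
      refine ⟨integral_nonneg (fun ω => le_min (abs_nonneg _) hM0), ?_, hlow, hposa⟩
      have happ := trunc_exp_bound μ (fun ω => |X 0 ω 0|) (hXmeas 0 0).abs
        (fun ω => abs_nonneg _) (fun r => a (2^r)) r₁ K hK1 hK2 hK3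
        (a mm * δ) hM0 hMK
      exact le_trans happ hK6
    have hemn := hTm.eventually hem
    apply squeeze_zero' (g := fun n : ℕ =>
      2*Cc^2/ε * (Cc * ((n * p n : ℕ):ℝ)^(1-α⁻¹) + 1/(n:ℝ)))
    · exact Eventually.of_forall fun n => div_nonneg (by positivity) (by positivity)
    · filter_upwards [hemn, hTm.eventually_ge_atTop 1, hp.eventually_ge_atTop 1,
        eventually_ge_atTop 1] with n hn hm1 hp1 hn1
      obtain ⟨he0, heb, hlow, hposa⟩ := hn
      have hmR : (1:ℝ) ≤ ((n * p n : ℕ):ℝ) := by exact_mod_cast hm1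
      have hmRpos : (0:ℝ) < ((n * p n : ℕ):ℝ) := by linarith
      have ham2 : (0:ℝ) < (a (n * p n))^2 := pow_pos hposa 2
      have hnR : (1:ℝ) ≤ (n:ℝ) := by exact_mod_cast hn1
      have hnRpos : (0:ℝ) < (n:ℝ) := by linarith
      set e : ℝ := ∫ ω, min |X 0 ω 0| (a (n * p n) * δ) ∂μ with hedef
      set am : ℝ := a (n * p n) with hamdef
      set mR : ℝ := ((n * p n : ℕ):ℝ) with hmRdef
      -- step A : e^2 ≤ 2*Cc^2 + 2*Cc^2*(am/mR)^2
      have hstepA : e^2 ≤ 2*Cc^2 + 2*Cc^2*(am/mR)^2 := by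
        have h1 : e^2 ≤ (Cc * (1 + am/mR))^2 := pow_le_pow_left₀ he0 heb 2
        nlinarith [sq_nonneg (Cc*(am/mR) - Cc), sq_nonneg (am/mR)]
      -- step D : p^2 n / am^2 ≤ Cc * mR^(1-α⁻¹)
      have hstepD : (p n:ℝ)^2 * n / am^2 ≤ Cc * mR^(1-α⁻¹) := by
        have hpn2 : (p n:ℝ)^2 * n ≤ mR^2 := by
          rw [hmRdef]
          push_cast
          nlinarith [mul_nonneg (mul_nonneg (sq_nonneg ((p n):ℝ)) hnRpos.le)
            (sub_nonneg.mpr hnR)]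
        have hd1 : mR^(1+α⁻¹) / Cc ≤ am^2 := by
          rw [div_le_iff₀ hCcpos]
          calc mR^(1+α⁻¹) ≤ Cc * am^2 := hlow
          _ = am^2 * Cc := by ring
        have hd2 : (0:ℝ) < mR^(1+α⁻¹) / Cc := by
          apply div_pos _ hCcpos
          exact Real.rpow_pos_of_pos hmRpos _
        calc (p n:ℝ)^2 * n / am^2 ≤ (p n:ℝ)^2 * n / (mR^(1+α⁻¹) / Cc) :=
              div_le_div_of_nonneg_left (by positivity) hd2 hd1
        _ ≤ mR^2 / (mR^(1+α⁻¹) / Cc) := (div_le_div_iff_of_pos_right hd2).mpr hpn2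
        _ = Cc * mR^(1-α⁻¹) := by
              rw [div_div_eq_mul_div, mul_comm, mul_div_assoc]
              congr 1
              rw [show (mR:ℝ)^2 = mR^(2:ℝ) by rw [← Real.rpow_natCast mR 2]; norm_num,
                ← Real.rpow_sub hmRpos]
              congr 1
              ring
      -- step E : p^2 n / mR^2 = 1/n
      have hstepE : (p n:ℝ)^2 * n / mR^2 = 1/(n:ℝ) := by
        have hpR : (0:ℝ) < (p n:ℝ) := by exact_mod_cast hp1
        rw [hmRdef]
        push_cast
        field_simp
      -- combine
      have hsplit : (p n:ℝ)^2 * n * e^2 / (am^2 * ε)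
          ≤ (p n:ℝ)^2 * n * (2*Cc^2 + 2*Cc^2*(am/mR)^2) / (am^2 * ε) :=
        (div_le_div_iff_of_pos_right (mul_pos ham2 hε)).mpr
          (mul_le_mul_of_nonneg_left hstepA (by positivity))
      have hid : (p n:ℝ)^2 * n * (2*Cc^2 + 2*Cc^2*(am/mR)^2) / (am^2 * ε)
          = 2*Cc^2/ε * ((p n:ℝ)^2 * n / am^2 + (p n:ℝ)^2 * n / mR^2) := by
        have hamne : am ≠ 0 := ne_of_gt hposa
        have hmRne : mR ≠ 0 := ne_of_gt hmRpos
        have hεne : ε ≠ 0 := ne_of_gt hε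
        field_simp
      calc (p n:ℝ)^2 * n * e^2 / (am^2 * ε)
          ≤ 2*Cc^2/ε * ((p n:ℝ)^2 * n / am^2 + (p n:ℝ)^2 * n / mR^2) := by
            rw [← hid]; exact hsplit
      _ ≤ 2*Cc^2/ε * (Cc * mR^(1-α⁻¹) + 1/(n:ℝ)) := by
            apply mul_le_mul_of_nonneg_left _ (by positivity)
            rw [hstepE]
            exact add_le_add_left hstepD _
    · have hgm : Tendsto (fun n : ℕ => ((n * p n : ℕ):ℝ)^(1-α⁻¹)) atTop (nhds 0) := by
        have h1 : Tendsto (fun x : ℝ => x^(-(α⁻¹-1))) atTop (nhds 0) :=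
          tendsto_rpow_neg_atTop (by linarith)
        have h2 : Tendsto (fun n : ℕ => ((n * p n : ℕ):ℝ)) atTop atTop :=
          tendsto_natCast_atTop_atTop.comp hTm
        have h3 := h1.comp h2
        rw [Function.comp_def] at h3
        convert h3 using 2 with n
        ring_nf
      have h1n : Tendsto (fun n : ℕ => 1/(n:ℝ)) atTop (nhds 0) := by
        exact tendsto_one_div_atTop_nhds_zero_nat
      have hfin := ((hgm.const_mul Cc).add h1n).const_mul (2*Cc^2/ε)
      have h0 : 2*Cc^2/ε * (Cc * 0 + 0) = 0 := by ring
      rw [h0] at hfin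
      exact hfin
  have hsum := hterm1.add hterm2
  rw [add_zero] at hsum
  have hlt : c < ε'.toReal := lt_of_le_of_lt (hcdef ▸ min_le_left _ _) (by linarith)
  have hev := hsum.eventually_lt_const hlt
  filter_upwards [master δ hδpos, hev] with n h1 h2
  have h3 : (μ {ω | (a (n * p n)) ^ 2 * ε <
      l2OpNorm (Matrix.of (fun i j : Fin (p n) =>
        if i = j then 0
        else ∑ t ∈ Finset.range n, X i ω t * X j ω t))}).toReal ≤ ε'.toReal :=
    le_of_lt (lt_of_le_of_lt h1 h2)
  calc μ {ω | (a (n * p n)) ^ 2 * ε <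
      l2OpNorm (Matrix.of (fun i j : Fin (p n) =>
        if i = j then 0
        else ∑ t ∈ Finset.range n, X i ω t * X j ω t))}
      = ENNReal.ofReal ((μ _).toReal) := (ENNReal.ofReal_toReal (measure_ne_top μ _)).symm
  _ ≤ ENNReal.ofReal (ε'.toReal) := ENNReal.ofReal_le_ofReal h3
  _ = ε' := ENNReal.ofReal_toReal htop
end
end
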